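/- arXiv:2410.15540 — 4 statements merged into one kernel-verified Lean document; each statement's English description precedes it below -/
import Mathlib

section
/- Let l ≥ 1 be an integer, U ⊆ ℝ^l open, f : U → ℝ continuously differentiable, b ∈ U with f(b) > 0, and t₀ > 0. Assume there are constants K > 0 and γ ∈ (0, 1/2] such that ‖∇f(y)‖ ≥ K · |f(y)|^{1−γ} for every y ∈ U. Let v : [0, t₀] → U be differentiable with v(0) = b such that for every t ∈ [0, t₀]: v′(t) = −∇f(v(t))/‖∇f(v(t))‖ if f(v(t)) > f(b)/2, and v′(t) = 0 otherwise. Then: (i) the function t ↦ f(v(t)) is non-increasing on [0, t₀]; and (ii) for every t ∈ [0, t₀] such that f(v(s)) > f(b)/2 for all s ∈ [0, t), one has f(v(t)) ≤ f(b) − K · (f(b)/2)^{1−γ} · t. -/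
/-- Quantitative decay along the normalized gradient flow (Section 4 of the paper).
`v` is the normalized gradient flow of `f` starting at `b`, stopped once `f` drops to
half its initial value; under the Łojasiewicz-type bound `‖∇f‖ ≥ K |f|^{1-γ}` on `U`,
(i) `t ↦ f (v t)` is non-increasing on `[0, t₀]`, and (ii) as long as the flow has not been
stopped, `f (v t) ≤ f b - K (f b / 2)^{1-γ} t`. -/
theorem stmt_1 (l : ℕ) (hl : 1 ≤ l) (U : Set (EuclideanSpace ℝ (Fin l))) (hU : IsOpen U)
    (f : EuclideanSpace ℝ (Fin l) → ℝ) (hf : ContDiffOn ℝ 1 f U)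
    (b : EuclideanSpace ℝ (Fin l)) (hb : b ∈ U) (hfb : 0 < f b)
    (t₀ : ℝ) (ht₀ : 0 < t₀) (K γ : ℝ) (hK : 0 < K) (hγ : γ ∈ Set.Ioc (0 : ℝ) (1 / 2))
    (hgrad : ∀ y ∈ U, K * |f y| ^ (1 - γ) ≤ ‖gradient f y‖)
    (v : ℝ → EuclideanSpace ℝ (Fin l)) (hv0 : v 0 = b)
    (hvU : ∀ t ∈ Set.Icc 0 t₀, v t ∈ U)
    (hv' : ∀ t ∈ Set.Icc 0 t₀,
      HasDerivAt v
        (if f b / 2 < f (v t) then -(‖gradient f (v t)‖⁻¹ • gradient f (v t)) else 0) t) :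
    AntitoneOn (fun t => f (v t)) (Set.Icc 0 t₀) ∧
      ∀ t ∈ Set.Icc 0 t₀, (∀ s ∈ Set.Ico 0 t, f b / 2 < f (v s)) →
        f (v t) ≤ f b - K * (f b / 2) ^ (1 - γ) * t := by
  have hderiv : ∀ t ∈ Set.Icc 0 t₀,
      HasDerivAt (fun s => f (v s))
        (if f b / 2 < f (v t) then -‖gradient f (v t)‖ else 0) t := by
    intro t ht
    have hdf : DifferentiableAt ℝ f (v t) :=
      (hf.contDiffAt (hU.mem_nhds (hvU t ht))).differentiableAt one_ne_zero
    have hg := hdf.hasGradientAt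
    have hcomp : HasDerivAt (fun s => f (v s)) (inner ℝ (gradient f (v t))
        (if f b / 2 < f (v t) then -(‖gradient f (v t)‖⁻¹ • gradient f (v t)) else 0)) t :=
      hg.hasFDerivAt.comp_hasDerivAt t (hv' t ht)
    convert hcomp using 1
    set G := gradient f (v t) with hG
    by_cases h : f b / 2 < f (v t)
    · have hGpos : 0 < ‖G‖ := by
        have h1 := hgrad (v t) (hvU t ht)
        have h2 : 0 < |f (v t)| ^ (1 - γ) :=
          Real.rpow_pos_of_pos (abs_pos.mpr (by linarith)) _
        nlinarith
      simp only [h, if_true, InnerProductSpace.toDual_apply_apply, inner_neg_right,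
        real_inner_smul_right, real_inner_self_eq_norm_sq]
      have : ‖G‖⁻¹ * ‖G‖ ^ 2 = ‖G‖ := by
        field_simp
      rw [this]
    · simp [h]
  have hcont : ContinuousOn (fun s => f (v s)) (Set.Icc 0 t₀) :=
    fun t ht => (hderiv t ht).continuousAt.continuousWithinAt
  have hanti : AntitoneOn (fun s => f (v s)) (Set.Icc 0 t₀) := by
    apply antitoneOn_of_deriv_nonpos (convex_Icc 0 t₀) hcont
    · intro t ht
      rw [interior_Icc] at ht
      exact (hderiv t (Set.Ioo_subset_Icc_self ht)).differentiableAt.differentiableWithinAt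
    · intro t ht
      rw [interior_Icc] at ht
      rw [(hderiv t (Set.Ioo_subset_Icc_self ht)).deriv]
      split_ifs
      · exact neg_nonpos.mpr (norm_nonneg _)
      · exact le_rfl
  refine ⟨hanti, ?_⟩
  intro t ht hs
  rcases eq_or_lt_of_le ht.1 with h0 | h0
  · rw [← h0, hv0]
    simp
  · set c := K * (f b / 2) ^ (1 - γ) with hc
    have hIcc : Set.Icc (0:ℝ) t ⊆ Set.Icc 0 t₀ :=
      Set.Icc_subset_Icc le_rfl ht.2
    have key : AntitoneOn (fun s => f (v s) + c * s) (Set.Icc 0 t) := by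
      apply antitoneOn_of_deriv_nonpos (convex_Icc 0 t)
      · exact (hcont.mono hIcc).add (continuousOn_const.mul continuousOn_id)
      · intro s hsm
        rw [interior_Icc] at hsm
        have hs' : s ∈ Set.Icc 0 t₀ := hIcc (Set.Ioo_subset_Icc_self hsm)
        have hD : HasDerivAt (fun x => f (v x) + c * x)
            ((if f b / 2 < f (v s) then -‖gradient f (v s)‖ else 0) + c * 1) s :=
          (hderiv s hs').add ((hasDerivAt_id s).const_mul c)
        exact hD.differentiableAt.differentiableWithinAt
      · intro s hsm
        rw [interior_Icc] at hsm
        have hs' : s ∈ Set.Icc 0 t₀ := hIcc (Set.Ioo_subset_Icc_self hsm)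
        have hD : HasDerivAt (fun x => f (v x) + c * x)
            ((if f b / 2 < f (v s) then -‖gradient f (v s)‖ else 0) + c * 1) s :=
          (hderiv s hs').add ((hasDerivAt_id s).const_mul c)
        rw [hD.deriv]
        have hgt : f b / 2 < f (v s) := hs s ⟨le_of_lt hsm.1, hsm.2⟩
        simp only [hgt, if_true, mul_one]
        have hle : c ≤ ‖gradient f (v s)‖ := by
          have h1 : (f b / 2) ^ (1 - γ) ≤ |f (v s)| ^ (1 - γ) := by
            apply Real.rpow_le_rpow (by linarith)
            · rw [abs_of_pos (by linarith)]; linarith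
            · have := hγ.2; linarith
          have h2 := hgrad (v s) (hvU s hs')
          nlinarith
        linarith
    have hfin := key (Set.left_mem_Icc.mpr h0.le) (Set.right_mem_Icc.mpr h0.le) h0.le
    simp only [hv0, mul_zero, add_zero] at hfin
    linarith
end

section
/- Let n ≥ 5 be an integer, d > 0, C > 0, α > 0, let f : (0, d) → ℝ be nondecreasing, and let u : (0, d) → [0, ∞) be Lebesgue measurable. Assume that for Lebesgue-almost every r ∈ (0, d), f is differentiable at r and f′(r) ≥ ((n−4)/r) · f(r) + u(r) − C · r^{n−5+α}. Then for all 0 < σ < ρ < d one has ∫_σ^ρ u(r) · r^{−(n−4)} dr ≤ f(ρ)/ρ^{n−4} − f(σ)/σ^{n−4} + (C/α) · ρ^α. -/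
open MeasureTheory
open Set

lemma mono_deriv_nonneg {G : ℝ → ℝ} (hG : Monotone G) (r : ℝ) : 0 ≤ deriv G r := by
  by_cases h : DifferentiableAt ℝ G r
  · have T : Filter.Tendsto (slope G r) (nhdsWithin r (Set.Ioi r)) (nhds (deriv G r)) :=
      ((hasDerivAt_iff_tendsto_slope.1 h.hasDerivAt).mono_left
        (nhdsWithin_mono r fun y hy => ne_of_gt hy))
    refine ge_of_tendsto T ?_
    filter_upwards [self_mem_nhdsWithin] with y hy
    rw [slope_def_field, div_eq_mul_inv]
    exact mul_nonneg (sub_nonneg.2 (hG (le_of_lt hy))) (inv_nonneg.2 (sub_nonneg.2 (le_of_lt hy)))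
  · rw [deriv_zero_of_not_differentiableAt h]

lemma pow_sub_pow_le_aux (x y : ℝ) (hx : 0 ≤ x) (hxy : x ≤ y) :
    ∀ k : ℕ, y ^ (k+1) - x ^ (k+1) ≤ (k+1) * y ^ k * (y - x) := by
  intro k; induction k with
  | zero => simp
  | succ j ih =>
    have hy : 0 ≤ y := hx.trans hxy
    have h1 : x ^ (j+1) ≤ y ^ (j+1) := pow_le_pow_left₀ hx hxy _
    have h2 : y * (y ^ (j+1) - x ^ (j+1)) ≤ y * ((j+1) * y ^ j * (y - x)) :=
      mul_le_mul_of_nonneg_left ih hy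
    have h3 : x ^ (j+1) * (y - x) ≤ y ^ (j+1) * (y - x) :=
      mul_le_mul_of_nonneg_right h1 (by linarith)
    have he : y ^ (j+2) - x ^ (j+2) = y * (y ^ (j+1) - x ^ (j+1)) + x ^ (j+1) * (y - x) := by ring
    have h4 : y * (((j:ℝ)+1) * y ^ j * (y - x)) = ((j:ℝ)+1) * y ^ (j+1) * (y - x) := by ring
    show y ^ (j+2) - x ^ (j+2) ≤ (((j:ℕ)+1:ℕ)+1:ℝ) * y ^ (j+1) * (y - x)
    push_cast
    linarith

lemma inv_pow_sub_le (k : ℕ) (hk : 1 ≤ k) {x y : ℝ} (hx : 0 < x) (hxy : x ≤ y) :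
    (x ^ k)⁻¹ - (y ^ k)⁻¹ ≤ (y - x) * ((k : ℝ) * (x ^ (k+1))⁻¹) := by
  obtain ⟨j, rfl⟩ : ∃ j, k = j + 1 := ⟨k - 1, (Nat.succ_pred_eq_of_pos hk).symm⟩
  have hy : 0 < y := hx.trans_le hxy
  have hxk : (0:ℝ) < x ^ (j+1) := pow_pos hx _
  have hyk : (0:ℝ) < y ^ (j+1) := pow_pos hy _
  have hxk2 : (0:ℝ) < x ^ (j+2) := pow_pos hx _
  have key : x * (y ^ (j+1) - x ^ (j+1)) ≤ (j+1) * (y - x) * y ^ (j+1) := by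
    have h1 := pow_sub_pow_le_aux x y hx.le hxy j
    have h2 : x * (y ^ (j+1) - x ^ (j+1)) ≤ y * (y ^ (j+1) - x ^ (j+1)) :=
      mul_le_mul_of_nonneg_right hxy (by nlinarith [pow_le_pow_left₀ hx.le hxy (j+1)])
    have h3 : y * (((j:ℝ)+1) * y ^ j * (y - x)) = ((j:ℝ)+1) * (y - x) * y ^ (j+1) := by ring
    have h4 : y * (y ^ (j+1) - x ^ (j+1)) ≤ y * (((j:ℝ)+1) * y ^ j * (y - x)) :=
      mul_le_mul_of_nonneg_left h1 hy.le
    linarith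
  have hc : (0:ℝ) < x ^ (j+2) * y ^ (j+1) := by positivity
  rw [← mul_le_mul_iff_of_pos_right hc]
  have e1 : ((x ^ (j+1))⁻¹ - (y ^ (j+1))⁻¹) * (x ^ (j+2) * y ^ (j+1))
      = x * (y ^ (j+1) - x ^ (j+1)) := by
    field_simp
    ring
  have e2 : (y - x) * ((((j:ℝ)+1)) * (x ^ (j+2))⁻¹) * (x ^ (j+2) * y ^ (j+1))
      = ((j:ℝ)+1) * (y - x) * y ^ (j+1) := by
    field_simp
  push_cast
  rw [e1, e2]
  exact key

lemma integral_psi (k : ℕ) (hk : 1 ≤ k) {x y : ℝ} (hx : 0 < x) (hxy : x ≤ y) :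
    ∫ t in Ioc x y, (k : ℝ) * (t ^ (k+1))⁻¹ = (x ^ k)⁻¹ - (y ^ k)⁻¹ := by
  obtain ⟨j, rfl⟩ : ∃ j, k = j + 1 := ⟨k - 1, (Nat.succ_pred_eq_of_pos hk).symm⟩
  rw [← intervalIntegral.integral_of_le hxy]
  have H : ∀ t ∈ uIcc x y, HasDerivAt (fun t : ℝ => -(t ^ (j+1))⁻¹)
      (((j:ℕ)+1 : ℝ) * (t ^ (j+2))⁻¹) t := by
    intro t ht
    rw [uIcc_of_le hxy] at ht
    have ht0 : 0 < t := hx.trans_le ht.1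
    have h1 : HasDerivAt (fun t : ℝ => t ^ (j+1)) (((j:ℝ)+1) * t ^ j) t := by
      simpa using hasDerivAt_pow (j+1) t
    have h2 := (h1.inv (ne_of_gt (pow_pos ht0 _))).neg
    refine h2.congr_deriv ?_
    have htne : t ≠ 0 := ne_of_gt ht0
    field_simp
    ring
  have key := intervalIntegral.integral_eq_sub_of_hasDerivAt H ?_
  · rw [show ((j:ℕ)+1+1) = j + 2 from rfl] at key ⊢
    push_cast at key ⊢
    rw [key]; ring
  · apply ContinuousOn.intervalIntegrable
    apply (continuousOn_const.mul (ContinuousOn.inv₀ (continuousOn_pow _) ?_))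
    intro t ht
    rw [uIcc_of_le hxy] at ht
    exact pow_ne_zero _ (ne_of_gt (hx.trans_le ht.1))

lemma helperII (G : ℝ → ℝ) (hG : Monotone G) (k : ℕ) (c e : ℝ) {a b : ℝ} (hab : a ≤ b)
    (hae : 0 < a + e) :
    IntervalIntegrable (fun x => G (x + c) * (((x + e) ^ k)⁻¹)) volume a b := by
  rw [intervalIntegrable_iff_integrableOn_Ioc_of_le hab]
  apply Measure.integrableOn_of_bounded (M := (|G (a + c)| + |G (b + c)|) * ((a + e) ^ k)⁻¹)
    measure_Ioc_lt_top.ne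
  · exact ((hG.measurable.comp (measurable_add_const c)).mul
      (((measurable_add_const e).pow_const k).inv)).aestronglyMeasurable
  · refine (ae_restrict_iff' measurableSet_Ioc).2 (Filter.Eventually.of_forall fun x hx => ?_)
    have hxe : 0 < x + e := lt_of_lt_of_le hae (by linarith [hx.1])
    have h1 : |G (x + c)| ≤ |G (a + c)| + |G (b + c)| := by
      have hm := abs_le_max_abs_abs (hG (by linarith [hx.1] : a + c ≤ x + c))
        (hG (by linarith [hx.2] : x + c ≤ b + c))
      exact hm.trans (max_le (le_add_of_nonneg_right (abs_nonneg _))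
        (le_add_of_nonneg_left (abs_nonneg _)))
    have h2 : ((x + e) ^ k)⁻¹ ≤ ((a + e) ^ k)⁻¹ := by
      apply inv_anti₀ (pow_pos hae k)
      exact pow_le_pow_left₀ hae.le (by linarith [hx.1]) k
    rw [norm_mul, Real.norm_eq_abs, Real.norm_eq_abs, abs_inv, abs_pow,
      abs_of_pos hxe]
    exact mul_le_mul h1 h2 (by positivity) (by positivity)

lemma step_bound (k : ℕ) (hk : 1 ≤ k) {σ ρ δ : ℝ} (hσ : 0 < σ) (hσρ : σ < ρ) (hδ : 0 < δ)
    (hδρ : δ < ρ - σ) (G : ℝ → ℝ) (hG : Monotone G) (hG0 : 0 ≤ G σ)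
    (hGc : ∀ x, ρ ≤ x → G x = G ρ) :
    ∫ x in Ioc σ ρ, (G (x + δ) - G x) * δ⁻¹ * (((x + δ) ^ k)⁻¹)
      ≤ (∫ x in Ioc σ ρ, G x * ((k : ℝ) * ((x ^ (k+1))⁻¹))) + G ρ * ((ρ ^ k)⁻¹)
        - G σ * (((σ + 2*δ) ^ k)⁻¹) := by
  have hGnn : ∀ x, σ ≤ x → 0 ≤ G x := fun x hx => hG0.trans (hG hx)
  have hGρ0 : 0 ≤ G ρ := hGnn ρ hσρ.le
  -- interval integrability facts
  have IIg : ∀ {a b : ℝ}, σ ≤ a → a ≤ b → IntervalIntegrable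
      (fun x => G x * ((x ^ k)⁻¹)) volume a b := by
    intro a b ha hab
    have := helperII G hG k 0 0 hab (by linarith)
    simpa using this
  have IIψ : ∀ {a b : ℝ}, σ ≤ a → a ≤ b → IntervalIntegrable
      (fun x => G x * ((k : ℝ) * ((x ^ (k+1))⁻¹))) volume a b := by
    intro a b ha hab
    have h0 : IntervalIntegrable (fun x => G x * ((x ^ (k+1))⁻¹)) volume a b := by
      have := helperII G hG (k+1) 0 0 hab (by linarith)
      simpa using this
    have := h0.const_mul (k : ℝ)
    apply this.congr
    intro x _
    ring
  have IIA : IntervalIntegrable (fun x => G (x + δ) * (((x + δ) ^ k)⁻¹)) volume σ ρ :=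
    helperII G hG k δ δ hσρ.le (by linarith)
  have IIB : IntervalIntegrable (fun x => G x * (((x + δ) ^ k)⁻¹)) volume σ ρ := by
    have := helperII G hG k 0 δ hσρ.le (by linarith : (0:ℝ) < σ + δ)
    simpa using this
  have IIB1 : IntervalIntegrable (fun x => G x * (((x + δ) ^ k)⁻¹)) volume σ (σ + δ) := by
    have := helperII G hG k 0 δ (by linarith : σ ≤ σ + δ) (by linarith : (0:ℝ) < σ + δ)
    simpa using this
  have IIB2 : IntervalIntegrable (fun x => G x * (((x + δ) ^ k)⁻¹)) volume (σ + δ) ρ := by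
    have := helperII G hG k 0 δ (by linarith : σ + δ ≤ ρ) (by linarith : (0:ℝ) < σ + δ + δ)
    simpa using this
  -- rewrite the set integrals as interval integrals
  rw [← intervalIntegral.integral_of_le hσρ.le, ← intervalIntegral.integral_of_le hσρ.le]
  -- LHS = δ⁻¹ • (A - B)
  have hLHS : ∫ x in σ..ρ, (G (x + δ) - G x) * δ⁻¹ * (((x + δ) ^ k)⁻¹)
      = δ⁻¹ * ((∫ x in σ..ρ, G (x + δ) * (((x + δ) ^ k)⁻¹))
          - ∫ x in σ..ρ, G x * (((x + δ) ^ k)⁻¹)) := by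
    rw [← intervalIntegral.integral_sub IIA IIB, ← intervalIntegral.integral_const_mul]
    apply intervalIntegral.integral_congr
    intro x _
    ring
  -- A as a shifted integral and its splitting
  have hA : (∫ x in σ..ρ, G (x + δ) * (((x + δ) ^ k)⁻¹))
      = ∫ x in (σ + δ)..(ρ + δ), G x * ((x ^ k)⁻¹) :=
    intervalIntegral.integral_comp_add_right (fun x => G x * ((x ^ k)⁻¹)) δ
  have hAsplit : (∫ x in (σ + δ)..(ρ + δ), G x * ((x ^ k)⁻¹))
      = (∫ x in (σ + δ)..ρ, G x * ((x ^ k)⁻¹)) + ∫ x in ρ..(ρ + δ), G x * ((x ^ k)⁻¹) :=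
    (intervalIntegral.integral_add_adjacent_intervals
      (IIg (by linarith) (by linarith)) (IIg (by linarith) (by linarith))).symm
  have hBsplit : (∫ x in σ..ρ, G x * (((x + δ) ^ k)⁻¹))
      = (∫ x in σ..(σ + δ), G x * (((x + δ) ^ k)⁻¹))
        + ∫ x in (σ + δ)..ρ, G x * (((x + δ) ^ k)⁻¹) :=
    (intervalIntegral.integral_add_adjacent_intervals IIB1 IIB2).symm
  -- Term 1 : the bulk term
  have hT1 : δ⁻¹ * ((∫ x in (σ + δ)..ρ, G x * ((x ^ k)⁻¹))
      - ∫ x in (σ + δ)..ρ, G x * (((x + δ) ^ k)⁻¹))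
      ≤ ∫ x in (σ + δ)..ρ, G x * ((k : ℝ) * ((x ^ (k+1))⁻¹)) := by
    rw [← intervalIntegral.integral_sub (IIg (by linarith) (by linarith)) IIB2,
      ← intervalIntegral.integral_const_mul]
    apply intervalIntegral.integral_mono_on (by linarith)
    · exact (((IIg (by linarith) (by linarith)).sub IIB2).const_mul _)
    · exact IIψ (by linarith) (by linarith)
    · intro x hx
      have hx0 : 0 < x := by have := hx.1; linarith
      have key := inv_pow_sub_le k hk hx0 (by linarith : x ≤ x + δ)
      have hGx : 0 ≤ G x := hGnn x (by linarith [hx.1])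
      have : G x * ((x ^ k)⁻¹ - ((x + δ) ^ k)⁻¹) ≤ G x * (δ * ((k : ℝ) * ((x ^ (k+1))⁻¹))) := by
        apply mul_le_mul_of_nonneg_left _ hGx
        simpa using key
      calc δ⁻¹ * (G x * ((x ^ k)⁻¹) - G x * (((x + δ) ^ k)⁻¹))
          = δ⁻¹ * (G x * ((x ^ k)⁻¹ - ((x + δ) ^ k)⁻¹)) := by ring
        _ ≤ δ⁻¹ * (G x * (δ * ((k : ℝ) * ((x ^ (k+1))⁻¹)))) :=
            mul_le_mul_of_nonneg_left this (by positivity)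
        _ = G x * ((k : ℝ) * ((x ^ (k+1))⁻¹)) := by field_simp
  -- Term 2 : right endpoint
  have hT2 : δ⁻¹ * (∫ x in ρ..(ρ + δ), G x * ((x ^ k)⁻¹)) ≤ G ρ * ((ρ ^ k)⁻¹) := by
    have hmono : (∫ x in ρ..(ρ + δ), G x * ((x ^ k)⁻¹))
        ≤ ∫ _x in ρ..(ρ + δ), G ρ * ((ρ ^ k)⁻¹) := by
      apply intervalIntegral.integral_mono_on (by linarith)
        (IIg (by linarith) (by linarith)) intervalIntegrable_const
      intro x hx
      rw [hGc x hx.1]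
      apply mul_le_mul_of_nonneg_left _ hGρ0
      apply inv_anti₀ (pow_pos (by linarith : (0:ℝ) < ρ) _)
      exact pow_le_pow_left₀ (by linarith) hx.1 _
    rw [intervalIntegral.integral_const, smul_eq_mul] at hmono
    calc δ⁻¹ * (∫ x in ρ..(ρ + δ), G x * ((x ^ k)⁻¹))
        ≤ δ⁻¹ * ((ρ + δ - ρ) * (G ρ * ((ρ ^ k)⁻¹))) :=
          mul_le_mul_of_nonneg_left hmono (by positivity)
      _ = G ρ * ((ρ ^ k)⁻¹) := by field_simp; ring
  -- Term 3 : left endpoint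
  have hT3 : G σ * (((σ + 2*δ) ^ k)⁻¹)
      ≤ δ⁻¹ * ∫ x in σ..(σ + δ), G x * (((x + δ) ^ k)⁻¹) := by
    have hmono : (∫ _x in σ..(σ + δ), G σ * (((σ + 2*δ) ^ k)⁻¹))
        ≤ ∫ x in σ..(σ + δ), G x * (((x + δ) ^ k)⁻¹) := by
      apply intervalIntegral.integral_mono_on (by linarith) intervalIntegrable_const IIB1
      intro x hx
      have h1 : ((σ + 2*δ) ^ k)⁻¹ ≤ ((x + δ) ^ k)⁻¹ := by
        apply inv_anti₀ (pow_pos (by linarith [hx.1] : (0:ℝ) < x + δ) _)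
        exact pow_le_pow_left₀ (by linarith [hx.1]) (by linarith [hx.2]) _
      exact mul_le_mul (hG hx.1) h1 (by positivity) (hGnn x hx.1)
    rw [intervalIntegral.integral_const, smul_eq_mul] at hmono
    calc G σ * (((σ + 2*δ) ^ k)⁻¹)
        = δ⁻¹ * ((σ + δ - σ) * (G σ * (((σ + 2*δ) ^ k)⁻¹))) := by field_simp; ring
      _ ≤ δ⁻¹ * ∫ x in σ..(σ + δ), G x * (((x + δ) ^ k)⁻¹) :=
          mul_le_mul_of_nonneg_left hmono (by positivity)
  -- nonnegativity of the ψ-term on [σ, σ+δ]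
  have hψnn : (0:ℝ) ≤ ∫ x in σ..(σ + δ), G x * ((k : ℝ) * ((x ^ (k+1))⁻¹)) := by
    apply intervalIntegral.integral_nonneg (by linarith)
    intro x hx
    have : 0 < x := by linarith [hx.1]
    have := hGnn x hx.1
    positivity
  have hψsplit : (∫ x in σ..ρ, G x * ((k : ℝ) * ((x ^ (k+1))⁻¹)))
      = (∫ x in σ..(σ + δ), G x * ((k : ℝ) * ((x ^ (k+1))⁻¹)))
        + ∫ x in (σ + δ)..ρ, G x * ((k : ℝ) * ((x ^ (k+1))⁻¹)) :=
    (intervalIntegral.integral_add_adjacent_intervals (IIψ le_rfl (by linarith))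
      (IIψ (by linarith) (by linarith))).symm
  rw [hLHS, hA, hAsplit, hBsplit, hψsplit]
  have expand : δ⁻¹ * ((∫ x in (σ + δ)..ρ, G x * ((x ^ k)⁻¹))
        + (∫ x in ρ..(ρ + δ), G x * ((x ^ k)⁻¹))
      - ((∫ x in σ..(σ + δ), G x * (((x + δ) ^ k)⁻¹))
        + ∫ x in (σ + δ)..ρ, G x * (((x + δ) ^ k)⁻¹)))
      = δ⁻¹ * ((∫ x in (σ + δ)..ρ, G x * ((x ^ k)⁻¹))
          - ∫ x in (σ + δ)..ρ, G x * (((x + δ) ^ k)⁻¹))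
        + δ⁻¹ * (∫ x in ρ..(ρ + δ), G x * ((x ^ k)⁻¹))
        - δ⁻¹ * ∫ x in σ..(σ + δ), G x * (((x + δ) ^ k)⁻¹) := by ring
  rw [expand]
  linarith

lemma lemC (k : ℕ) (hk : 1 ≤ k) {σ ρ : ℝ} (hσ : 0 < σ) (hσρ : σ < ρ)
    (G : ℝ → ℝ) (hG : Monotone G) (hG0 : 0 ≤ G σ) (hGc : ∀ x, ρ ≤ x → G x = G ρ) :
    ∫⁻ x in Ioc σ ρ, ENNReal.ofReal (deriv G x * ((x ^ k)⁻¹)) ≤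
      ENNReal.ofReal ((∫ x in Ioc σ ρ, G x * ((k : ℝ) * ((x ^ (k+1))⁻¹)))
        + G ρ * ((ρ ^ k)⁻¹) - G σ * ((σ ^ k)⁻¹)) := by
  set δ : ℕ → ℝ := fun j => ((j : ℝ) + 1)⁻¹ with hδdef
  have hδpos : ∀ j, 0 < δ j := fun j => by positivity
  have hδ0 : Filter.Tendsto δ Filter.atTop (nhds 0) := by
    simpa [hδdef, one_div] using tendsto_one_div_add_atTop_nhds_zero_nat (𝕜 := ℝ)
  set h : ℕ → ℝ → ℝ := fun j x => (G (x + δ j) - G x) * (δ j)⁻¹ * (((x + δ j) ^ k)⁻¹) with hhdef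
  have hmeas : ∀ j, Measurable fun x => ENNReal.ofReal (h j x) := fun j => by
    apply Measurable.ennreal_ofReal
    exact (((hG.measurable.comp (measurable_add_const (δ j))).sub hG.measurable).mul
      measurable_const).mul (((measurable_add_const (δ j)).pow_const k).inv)
  have hpt : ∀ᵐ x ∂(volume.restrict (Ioc σ ρ)),
      Filter.Tendsto (fun j => h j x) Filter.atTop (nhds (deriv G x * ((x ^ k)⁻¹))) := by
    filter_upwards [ae_restrict_of_ae hG.ae_differentiableAt, ae_restrict_mem measurableSet_Ioc]
      with x hdx hx
    have hx0 : 0 < x := hσ.trans hx.1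
    have hseq : Filter.Tendsto (fun j => x + δ j) Filter.atTop (nhdsWithin x {x}ᶜ) := by
      apply tendsto_nhdsWithin_of_tendsto_nhds_of_eventually_within
      · have : Filter.Tendsto (fun j => x + δ j) Filter.atTop (nhds (x + 0)) :=
          tendsto_const_nhds.add hδ0
        simpa using this
      · refine Filter.Eventually.of_forall fun j => ?_
        simp only [mem_compl_iff, mem_singleton_iff]
        have := hδpos j
        intro hc
        nlinarith [congrArg (fun t => t - x) hc]
    have hslope : Filter.Tendsto (fun j => slope G x (x + δ j)) Filter.atTop
        (nhds (deriv G x)) :=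
      (hasDerivAt_iff_tendsto_slope.1 hdx.hasDerivAt).comp hseq
    have hslope' : Filter.Tendsto (fun j => (G (x + δ j) - G x) * (δ j)⁻¹) Filter.atTop
        (nhds (deriv G x)) := by
      apply hslope.congr
      intro j
      rw [slope_def_field, add_sub_cancel_left, div_eq_mul_inv]
    have hφ : Filter.Tendsto (fun j => (((x + δ j) ^ k)⁻¹)) Filter.atTop
        (nhds ((x ^ k)⁻¹)) := by
      have hc : ContinuousAt (fun y : ℝ => ((y ^ k)⁻¹)) x :=
        ((continuous_pow k).continuousAt).inv₀ (pow_ne_zero _ hx0.ne')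
      exact hc.tendsto.comp (hseq.mono_right nhdsWithin_le_nhds)
    exact hslope'.mul hφ
  have hb : Filter.Tendsto (fun j => (∫ x in Ioc σ ρ, G x * ((k : ℝ) * ((x ^ (k+1))⁻¹)))
      + G ρ * ((ρ ^ k)⁻¹) - G σ * (((σ + 2*δ j) ^ k)⁻¹)) Filter.atTop
      (nhds ((∫ x in Ioc σ ρ, G x * ((k : ℝ) * ((x ^ (k+1))⁻¹)))
        + G ρ * ((ρ ^ k)⁻¹) - G σ * ((σ ^ k)⁻¹))) := by
    have h2δ : Filter.Tendsto (fun j => σ + 2 * δ j) Filter.atTop (nhds σ) := by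
      have : Filter.Tendsto (fun j => σ + 2 * δ j) Filter.atTop (nhds (σ + 2 * 0)) :=
        tendsto_const_nhds.add (hδ0.const_mul 2)
      simpa using this
    have hφσ : Filter.Tendsto (fun j => (((σ + 2*δ j) ^ k)⁻¹)) Filter.atTop
        (nhds ((σ ^ k)⁻¹)) :=
      (((continuous_pow k).continuousAt).inv₀ (pow_ne_zero _ hσ.ne')).tendsto.comp h2δ
    exact tendsto_const_nhds.sub (hφσ.const_mul (G σ))
  have hev : ∀ᶠ j in Filter.atTop, (∫⁻ x in Ioc σ ρ, ENNReal.ofReal (h j x))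
      ≤ ENNReal.ofReal ((∫ x in Ioc σ ρ, G x * ((k : ℝ) * ((x ^ (k+1))⁻¹)))
          + G ρ * ((ρ ^ k)⁻¹) - G σ * (((σ + 2*δ j) ^ k)⁻¹)) := by
    filter_upwards [hδ0.eventually (gt_mem_nhds (show (0:ℝ) < ρ - σ by linarith))] with j hj
    have hδj := hδpos j
    have hint : IntegrableOn (h j) (Ioc σ ρ) volume := by
      have h1 : IntervalIntegrable (fun x => G (x + δ j) * (((x + δ j) ^ k)⁻¹)) volume σ ρ :=
        helperII G hG k (δ j) (δ j) hσρ.le (by linarith)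
      have h2 : IntervalIntegrable (fun x => G x * (((x + δ j) ^ k)⁻¹)) volume σ ρ := by
        have := helperII G hG k 0 (δ j) hσρ.le (by linarith)
        simpa using this
      have h3 := ((h1.sub h2).const_mul (δ j)⁻¹)
      rw [intervalIntegrable_iff_integrableOn_Ioc_of_le hσρ.le] at h3
      apply h3.congr
      refine Filter.Eventually.of_forall fun x => ?_
      simp only [hhdef]
      ring
    have hpos : 0 ≤ᵐ[volume.restrict (Ioc σ ρ)] h j := by
      refine (ae_restrict_iff' measurableSet_Ioc).2 (Filter.Eventually.of_forall fun x hx => ?_)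
      have hx0 : 0 < x := hσ.trans hx.1
      have hd : 0 ≤ G (x + δ j) - G x := sub_nonneg.2 (hG (by linarith))
      have hi1 : (0:ℝ) ≤ (δ j)⁻¹ := by positivity
      have hi2 : (0:ℝ) ≤ (((x + δ j) ^ k)⁻¹) := by positivity
      exact mul_nonneg (mul_nonneg hd hi1) hi2
    rw [← ofReal_integral_eq_lintegral_ofReal hint hpos]
    exact ENNReal.ofReal_le_ofReal (step_bound k hk hσ hσρ hδj hj G hG hG0 hGc)
  calc ∫⁻ x in Ioc σ ρ, ENNReal.ofReal (deriv G x * ((x ^ k)⁻¹))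
      = ∫⁻ x in Ioc σ ρ, Filter.liminf (fun j => ENNReal.ofReal (h j x)) Filter.atTop := by
        apply lintegral_congr_ae
        filter_upwards [hpt] with x hx
        exact ((ENNReal.tendsto_ofReal hx).liminf_eq).symm
    _ ≤ Filter.liminf (fun j => ∫⁻ x in Ioc σ ρ, ENNReal.ofReal (h j x)) Filter.atTop :=
        lintegral_liminf_le hmeas
    _ ≤ Filter.liminf (fun j => ENNReal.ofReal
          ((∫ x in Ioc σ ρ, G x * ((k : ℝ) * ((x ^ (k+1))⁻¹)))
            + G ρ * ((ρ ^ k)⁻¹) - G σ * (((σ + 2*δ j) ^ k)⁻¹))) Filter.atTop :=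
        Filter.liminf_le_liminf hev
    _ = ENNReal.ofReal ((∫ x in Ioc σ ρ, G x * ((k : ℝ) * ((x ^ (k+1))⁻¹)))
          + G ρ * ((ρ ^ k)⁻¹) - G σ * ((σ ^ k)⁻¹)) :=
        (ENNReal.tendsto_ofReal hb).liminf_eq

/-- One-variable differential-inequality lemma, the analytic core of the almost
monotonicity formula (Proposition 2.4): if `f` is nondecreasing on `(0, d)`, `u ≥ 0`
is measurable, and for a.e. `r ∈ (0, d)` the function `f` is differentiable at `r` with
`f'(r) ≥ (n-4)/r · f(r) + u(r) - C r^{n-5+α}`, then for all `0 < σ < ρ < d`,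
`∫_σ^ρ u(r) r^{-(n-4)} dr ≤ f(ρ)/ρ^{n-4} - f(σ)/σ^{n-4} + (C/α) ρ^α`. -/
theorem stmt_4 (n : ℕ) (hn : 5 ≤ n) (d C α : ℝ) (hd : 0 < d) (hC : 0 < C) (hα : 0 < α)
    (f u : ℝ → ℝ) (hf : MonotoneOn f (Set.Ioo 0 d)) (hu : Measurable u)
    (hu0 : ∀ r ∈ Set.Ioo (0 : ℝ) d, 0 ≤ u r)
    (hder : ∀ᵐ r ∂(volume : Measure ℝ), r ∈ Set.Ioo (0 : ℝ) d →
      DifferentiableAt ℝ f r ∧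
        ((n : ℝ) - 4) / r * f r + u r - C * r ^ ((n : ℝ) - 5 + α) ≤ deriv f r) :
    ∀ σ ρ : ℝ, 0 < σ → σ < ρ → ρ < d →
      ∫ r in Set.Ioc σ ρ, u r / r ^ (n - 4)
        ≤ f ρ / ρ ^ (n - 4) - f σ / σ ^ (n - 4) + C / α * ρ ^ α := by
  intro σ ρ hσ hσρ hρd
  have hρ0 : 0 < ρ := hσ.trans hσρ
  set k : ℕ := n - 4 with hkdef
  have hk1 : 1 ≤ k := by omega
  have hk4 : ((k : ℕ) : ℝ) = (n : ℝ) - 4 := by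
    rw [hkdef, Nat.cast_sub (by omega : 4 ≤ n)]
    norm_num
  set m : ℝ := σ / 2 with hmdef
  have hm0 : 0 < m := by positivity
  have hmσ : m < σ := by rw [hmdef]; linarith
  set F : ℝ → ℝ := fun x => f (min (max x m) ρ) with hFdef
  have hproj : ∀ x : ℝ, min (max x m) ρ ∈ Set.Ioo (0:ℝ) d := by
    intro x
    constructor
    · have : m ≤ min (max x m) ρ := le_min (le_max_right x m) (by linarith)
      linarith
    · exact lt_of_le_of_lt (min_le_right _ _) hρd
  have hFmono : Monotone F := fun a b hab =>
    hf (hproj a) (hproj b) (min_le_min (max_le_max hab le_rfl) le_rfl)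
  have hFeq : ∀ x : ℝ, m ≤ x → x ≤ ρ → F x = f x := by
    intro x h1 h2
    rw [hFdef]
    simp only [max_eq_left h1, min_eq_left h2]
  have hFσ : F σ = f σ := hFeq σ hmσ.le hσρ.le
  have hFρ : F ρ = f ρ := hFeq ρ (by linarith) le_rfl
  set G : ℝ → ℝ := fun x => F x - F σ with hGdef
  have hGmono : Monotone G := fun a b hab => sub_le_sub_right (hFmono hab) _
  have hGσ : G σ = 0 := sub_self _
  have hGc : ∀ x, ρ ≤ x → G x = G ρ := by
    intro x hx
    have h1 : min (max x m) ρ = ρ := min_eq_right ((le_max_left x m).trans' hx)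
    have h2 : min (max ρ m) ρ = ρ := min_eq_right (le_max_left ρ m)
    simp only [hGdef, hFdef, h1, h2]
  -- the key lintegral bound
  have LC := lemC k hk1 hσ hσρ G hGmono (le_of_eq hGσ.symm) hGc
  rw [hGσ] at LC
  simp only [zero_mul, sub_zero] at LC
  set B : ℝ := (∫ x in Set.Ioc σ ρ, G x * ((k : ℝ) * ((x ^ (k+1))⁻¹))) + G ρ * ((ρ ^ k)⁻¹)
    with hBdef
  have hGnn : ∀ x ∈ Set.Ioc σ ρ, 0 ≤ G x := fun x hx =>
    sub_nonneg.2 (hFmono hx.1.le)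
  have hB0 : 0 ≤ B := by
    apply add_nonneg
    · apply setIntegral_nonneg measurableSet_Ioc
      intro x hx
      have hx0 : 0 < x := hσ.trans hx.1
      exact mul_nonneg (hGnn x hx) (by positivity)
    · exact mul_nonneg (sub_nonneg.2 (hFmono hσρ.le)) (by positivity)
  -- integrability of the pieces
  have HGψ : IntegrableOn (fun x => G x * ((k : ℝ) * ((x ^ (k+1))⁻¹))) (Set.Ioc σ ρ) volume := by
    have h0 := helperII G hGmono (k+1) 0 0 hσρ.le (by linarith : (0:ℝ) < σ + 0)
    have h1 : IntervalIntegrable (fun x => G x * ((x ^ (k+1))⁻¹)) volume σ ρ := by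
      simpa using h0
    have h2 := h1.const_mul (k : ℝ)
    rw [intervalIntegrable_iff_integrableOn_Ioc_of_le hσρ.le] at h2
    exact h2.congr (Filter.Eventually.of_forall fun x => by ring)
  have Hψc : IntegrableOn (fun x => F σ * ((k : ℝ) * ((x ^ (k+1))⁻¹))) (Set.Ioc σ ρ) volume := by
    have h0 := helperII (fun _ => F σ) monotone_const (k+1) 0 0 hσρ.le (by linarith : (0:ℝ) < σ + 0)
    have h1 : IntervalIntegrable (fun x => F σ * ((x ^ (k+1))⁻¹)) volume σ ρ := by
      simpa using h0
    have h2 := h1.const_mul (k : ℝ)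
    rw [intervalIntegrable_iff_integrableOn_Ioc_of_le hσρ.le] at h2
    exact h2.congr (Filter.Eventually.of_forall fun x => by ring)
  have hdmeas : Measurable fun x : ℝ => deriv G x * ((x ^ k)⁻¹) :=
    (measurable_deriv G).mul ((measurable_id.pow_const k).inv)
  have hdpos : 0 ≤ᵐ[volume.restrict (Set.Ioc σ ρ)] fun x => deriv G x * ((x ^ k)⁻¹) := by
    refine (ae_restrict_iff' measurableSet_Ioc).2 (Filter.Eventually.of_forall fun x hx => ?_)
    have hx0 : 0 < x := hσ.trans hx.1
    exact mul_nonneg (mono_deriv_nonneg hGmono x) (by positivity)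
  have Hd : IntegrableOn (fun x => deriv G x * ((x ^ k)⁻¹)) (Set.Ioc σ ρ) volume := by
    refine ⟨hdmeas.aestronglyMeasurable, ?_⟩
    rw [hasFiniteIntegral_iff_ofReal hdpos]
    exact lt_of_le_of_lt LC ENNReal.ofReal_lt_top
  have Hd_val : (∫ x in Set.Ioc σ ρ, deriv G x * ((x ^ k)⁻¹)) ≤ B := by
    rw [integral_eq_lintegral_of_nonneg_ae hdpos hdmeas.aestronglyMeasurable]
    calc (∫⁻ x in Set.Ioc σ ρ, ENNReal.ofReal (deriv G x * ((x ^ k)⁻¹))).toReal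
        ≤ (ENNReal.ofReal B).toReal := ENNReal.toReal_mono ENNReal.ofReal_ne_top LC
      _ = B := ENNReal.toReal_ofReal hB0
  have Hw : IntegrableOn (fun x => C * x ^ (α - 1)) (Set.Ioc σ ρ) volume := by
    apply IntegrableOn.mono_set _ Set.Ioc_subset_Icc_self
    apply ContinuousOn.integrableOn_Icc
    apply continuousOn_const.mul
    intro x hx
    exact (Real.continuousAt_rpow_const x (α-1)
      (Or.inl (ne_of_gt (lt_of_lt_of_le hσ hx.1)))).continuousWithinAt
  have Hw_val : (∫ x in Set.Ioc σ ρ, C * x ^ (α - 1)) = C * ((ρ ^ α - σ ^ α) / α) := by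
    rw [← intervalIntegral.integral_of_le hσρ.le, intervalIntegral.integral_const_mul,
      integral_rpow (Or.inl (by linarith : (-1:ℝ) < α - 1))]
    rw [show α - 1 + 1 = α by ring]
  have Hψc_val : (∫ x in Set.Ioc σ ρ, F σ * ((k : ℝ) * ((x ^ (k+1))⁻¹)))
      = F σ * ((σ ^ k)⁻¹) - F σ * ((ρ ^ k)⁻¹) := by
    rw [integral_const_mul, integral_psi k hk1 hσ hσρ.le]
    ring
  -- pointwise a.e. inequality
  have hne : ∀ᵐ x ∂(volume : Measure ℝ), x ≠ ρ := by
    refine ae_iff.2 ?_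
    have heq : {x : ℝ | ¬x ≠ ρ} = {ρ} := by ext y; simp
    rw [heq]
    exact Real.volume_singleton
  have hptw : (fun x => u x / x ^ k) ≤ᵐ[volume.restrict (Set.Ioc σ ρ)]
      fun x => deriv G x * ((x ^ k)⁻¹) - G x * ((k : ℝ) * ((x ^ (k+1))⁻¹))
        - F σ * ((k : ℝ) * ((x ^ (k+1))⁻¹)) + C * x ^ (α - 1) := by
    filter_upwards [ae_restrict_mem measurableSet_Ioc, ae_restrict_of_ae hder,
      ae_restrict_of_ae hne] with x hx hdx hxρ
    have hx0 : 0 < x := hσ.trans hx.1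
    have hxρ' : x < ρ := lt_of_le_of_ne hx.2 hxρ
    obtain ⟨hdf, hineq⟩ := hdx ⟨hx0, lt_of_le_of_lt hx.2 hρd⟩
    have hFf : F =ᶠ[nhds x] f := by
      have hmem : Set.Ioo m ρ ∈ nhds x := isOpen_Ioo.mem_nhds ⟨by linarith [hx.1], hxρ'⟩
      filter_upwards [hmem] with y hy
      exact hFeq y hy.1.le hy.2.le
    have hdF : deriv F x = deriv f x := hFf.deriv_eq
    have hdG : deriv G x = deriv f x := by
      rw [hGdef]
      exact (deriv_sub_const (F σ)).trans hdF
    have hFx : F x = f x := hFeq x (by linarith [hx.1]) hx.2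
    have hxk : (0:ℝ) < x ^ k := pow_pos hx0 k
    have hxk1 : (0:ℝ) < x ^ (k+1) := pow_pos hx0 _
    have e0 : x ^ ((n:ℝ) - 5 + α) = x ^ k * x ^ (α - 1) := by
      have h1 : (n:ℝ) - 5 + α = ((k:ℕ) : ℝ) + (α - 1) := by rw [hk4]; ring
      rw [h1, Real.rpow_add hx0, Real.rpow_natCast]
    have hkey := mul_le_mul_of_nonneg_right hineq (inv_nonneg.2 hxk.le)
    have e2 : (((n:ℝ) - 4) / x * f x + u x - C * x ^ ((n:ℝ) - 5 + α)) * ((x ^ k)⁻¹)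
        = f x * ((k : ℝ) * ((x ^ (k+1))⁻¹)) + u x * ((x ^ k)⁻¹) - C * x ^ (α - 1) := by
      rw [e0, ← hk4]
      field_simp
      ring
    rw [e2] at hkey
    have hfxG : f x = G x + F σ := by rw [hGdef]; simp [hFx]
    have e3 : f x * ((k : ℝ) * ((x ^ (k+1))⁻¹))
        = G x * ((k : ℝ) * ((x ^ (k+1))⁻¹)) + F σ * ((k : ℝ) * ((x ^ (k+1))⁻¹)) := by
      rw [hfxG]; ring
    rw [div_eq_mul_inv]
    rw [hdG]
    linarith
  -- integrability of the LHS
  have HR : Integrable (fun x => deriv G x * ((x ^ k)⁻¹) - G x * ((k : ℝ) * ((x ^ (k+1))⁻¹))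
        - F σ * ((k : ℝ) * ((x ^ (k+1))⁻¹)) + C * x ^ (α - 1))
      (volume.restrict (Set.Ioc σ ρ)) := ((Hd.sub HGψ).sub Hψc).add Hw
  have H1 : Integrable (fun x => deriv G x * ((x ^ k)⁻¹) - G x * ((k : ℝ) * ((x ^ (k+1))⁻¹)))
      (volume.restrict (Set.Ioc σ ρ)) := Hd.sub HGψ
  have H2 : Integrable (fun x => deriv G x * ((x ^ k)⁻¹) - G x * ((k : ℝ) * ((x ^ (k+1))⁻¹))
      - F σ * ((k : ℝ) * ((x ^ (k+1))⁻¹))) (volume.restrict (Set.Ioc σ ρ)) := H1.sub Hψc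
  have HuInt : IntegrableOn (fun x => u x / x ^ k) (Set.Ioc σ ρ) volume := by
    apply Integrable.mono' HR
    · exact (hu.div (measurable_id.pow_const k)).aestronglyMeasurable
    · filter_upwards [hptw, ae_restrict_mem measurableSet_Ioc] with x h1 hx2
      have hx0 : 0 < x := hσ.trans hx2.1
      rw [Real.norm_eq_abs, abs_of_nonneg
        (div_nonneg (hu0 x ⟨hx0, lt_of_le_of_lt hx2.2 hρd⟩) (pow_pos hx0 k).le)]
      exact h1
  have hmono := integral_mono_ae HuInt HR hptw
  rw [integral_add H2 Hw, integral_sub H1 Hψc, integral_sub Hd HGψ] at hmono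
  -- final arithmetic
  have hGρval : G ρ * ((ρ ^ k)⁻¹) = f ρ * ((ρ ^ k)⁻¹) - f σ * ((ρ ^ k)⁻¹) := by
    rw [hGdef]
    simp only [hFρ, hFσ]
    ring
  have hσα : (0:ℝ) < σ ^ α := Real.rpow_pos_of_pos hσ α
  have hcα : C * ((ρ ^ α - σ ^ α) / α) = C / α * ρ ^ α - C / α * σ ^ α := by
    field_simp
  have hcσ : 0 ≤ C / α * σ ^ α := by positivity
  have hdivρ : f ρ / ρ ^ k = f ρ * ((ρ ^ k)⁻¹) := div_eq_mul_inv _ _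
  have hdivσ : f σ / σ ^ k = f σ * ((σ ^ k)⁻¹) := div_eq_mul_inv _ _
  rw [hdivρ, hdivσ]
  rw [hBdef] at Hd_val
  have h5 : F σ * ((σ ^ k)⁻¹) = f σ * ((σ ^ k)⁻¹) := by rw [hFσ]
  have h6 : F σ * ((ρ ^ k)⁻¹) = f σ * ((ρ ^ k)⁻¹) := by rw [hFσ]
  linarith [hmono, Hd_val, Hw_val, Hψc_val, hGρval, hcα, h5, h6]
end

section
/- Let n ≥ 5 be an integer, γ ∈ (0, 1), ε ∈ (0, 1), C₀ > 0, α₀ > 0 and ρ̃ ∈ (0, 1]. Let f : (0, ρ̃] → [0, ∞) be nondecreasing and set e(ρ) := f(ρ)/ρ^{n−4}. Assume that for Lebesgue-almost every ρ ∈ (0, ρ̃), f is differentiable at ρ and f(ρ) ≤ (1 − ε · |e(ρ) − C₀ρ^{α₀}|^{γ}) · (ρ/(n−4)) · f′(ρ) + C₀ · ρ^{n−4+α₀}. Then there exists a constant C > 0, depending only on n, γ, ε, C₀ and α₀, such that e(ρ) ≤ C · (log(ρ̃/ρ))^{−1/γ} for every ρ ∈ (0, ρ̃/2]. -/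
open MeasureTheory Set Filter Real Nat

lemma poly_exp_bound (k : ℕ) {α₀ q s : ℝ} (hα : 0 < α₀) (hq : 0 ≤ q) (hqk : q ≤ (k : ℝ))
    (hs : 0 < s) : s ^ q * Real.exp (-(α₀ * s)) ≤ 1 + (k ! : ℝ) / α₀ ^ k := by
  have hMk : (0:ℝ) ≤ (k ! : ℝ) / α₀ ^ k := by positivity
  rcases le_or_gt s 1 with h1 | h1
  · have h2 : s ^ q ≤ 1 := Real.rpow_le_one hs.le h1 hq
    have h3 : Real.exp (-(α₀ * s)) ≤ 1 := Real.exp_le_one_iff.2 (by nlinarith)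
    nlinarith [Real.exp_pos (-(α₀ * s)), Real.rpow_nonneg hs.le q]
  · have h2 : s ^ q ≤ s ^ (k : ℝ) := Real.rpow_le_rpow_of_exponent_le h1.le hqk
    rw [Real.rpow_natCast] at h2
    have h3 : (α₀ * s) ^ k / (k ! : ℝ) ≤ Real.exp (α₀ * s) :=
      Real.pow_div_factorial_le_exp (x := α₀ * s) (by positivity) k
    rw [div_le_iff₀ (by positivity : (0:ℝ) < (k ! : ℝ)), mul_pow] at h3
    have h4 : s ^ k * Real.exp (-(α₀ * s)) ≤ (k ! : ℝ) / α₀ ^ k := by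
      rw [Real.exp_neg, ← div_eq_mul_inv, div_le_div_iff₀ (Real.exp_pos _)
        (by positivity : (0:ℝ) < α₀ ^ k)]
      nlinarith [Real.exp_pos (α₀ * s)]
    have h5 : s ^ q * Real.exp (-(α₀ * s)) ≤ s ^ k * Real.exp (-(α₀ * s)) :=
      mul_le_mul_of_nonneg_right h2 (Real.exp_pos _).le
    linarith

lemma mono_deriv_nonneg_s5 {F : ℝ → ℝ} (hF : Monotone F) (x : ℝ) : 0 ≤ deriv F x := by
  by_cases h : DifferentiableAt ℝ F x
  · have hd := h.hasDerivAt
    rw [hasDerivAt_iff_tendsto_slope] at hd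
    have hsub : Set.Ioi x ⊆ {x}ᶜ := fun y hy => ne_of_gt hy
    have hd' : Filter.Tendsto (slope F x) (nhdsWithin x (Set.Ioi x)) (nhds (deriv F x)) :=
      hd.mono_left (nhdsWithin_mono x hsub)
    refine ge_of_tendsto hd' ?_
    filter_upwards [self_mem_nhdsWithin] with y hy
    rw [slope_def_field]
    have hxy : x < y := hy
    exact div_nonneg (sub_nonneg.2 (hF hxy.le)) (sub_nonneg.2 hxy.le)
  · rw [deriv_zero_of_not_differentiableAt h]

lemma crossing {F β β' : ℝ → ℝ} {a c : ℝ} (hac : a ≤ c) (hF : Monotone F)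
    (hd : ∀ x ∈ Set.Icc a c, HasDerivAt β (β' x) x)
    (hβ'pos : ∀ x ∈ Set.Icc a c, 0 ≤ β' x)
    (hβ'cont : ContinuousOn β' (Set.Icc a c))
    (hkey : ∀ᵐ x ∂(volume : Measure ℝ), x ∈ Set.Ioo a c → β x ≤ F x → β' x ≤ deriv F x)
    (h0 : β a < F a) : β c ≤ F c := by
  by_contra hc
  push_neg at hc
  set S : Set ℝ := {x | x ∈ Set.Icc a c ∧ F x < β x} with hS
  have hcS : c ∈ S := ⟨⟨hac, le_rfl⟩, hc⟩
  have hSne : S.Nonempty := ⟨c, hcS⟩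
  have hbdd : BddBelow S := ⟨a, fun x hx => hx.1.1⟩
  set t := sInf S with ht
  have hat : a ≤ t := le_csInf hSne fun x hx => hx.1.1
  have htc : t ≤ c := csInf_le hbdd hcS
  have step1 : ∀ x ∈ Set.Ioo a t, β x ≤ F x := by
    intro x hx
    by_contra hxb
    push_neg at hxb
    have : x ∈ S := ⟨⟨hx.1.le, hx.2.le.trans htc⟩, hxb⟩
    exact absurd (csInf_le hbdd this) (not_le.2 hx.2)
  set μ := hF.stieltjesFunction.measure with hμ
  set g := hF.stieltjesFunction with hg
  have step2 : β t - β a ≤ F t - F a := by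
    rcases eq_or_lt_of_le hat with heq | hat'
    · rw [← heq]; simp
    have hA : ∀ᵐ x ∂(volume : Measure ℝ), x ∈ Set.Ioo a t →
        ENNReal.ofReal (β' x) ≤ μ.rnDeriv volume x := by
      filter_upwards [hF.ae_hasDerivAt, hkey, Measure.rnDeriv_lt_top μ volume]
        with x hdF hk hfin hx
      have hx' : x ∈ Set.Ioo a c := ⟨hx.1, lt_of_lt_of_le hx.2 htc⟩
      have h1 : β' x ≤ deriv F x := hk hx' (step1 x hx)
      rw [hdF.deriv] at h1
      calc ENNReal.ofReal (β' x) ≤ ENNReal.ofReal (μ.rnDeriv volume x).toReal :=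
            ENNReal.ofReal_le_ofReal h1
        _ = μ.rnDeriv volume x := ENNReal.ofReal_toReal hfin.ne
    have hlint : ∫⁻ x in Set.Ioo a t, ENNReal.ofReal (β' x) ≤ μ (Set.Ioo a t) := by
      refine le_trans (lintegral_mono_ae ?_) (Measure.setLIntegral_rnDeriv_le _)
      rw [ae_restrict_iff' measurableSet_Ioo]
      filter_upwards [hA] with x hx hmem using hx hmem
    have hμIoo : μ (Set.Ioo a t) ≤ ENNReal.ofReal (F t - F a) := by
      rw [StieltjesFunction.measure_Ioo]
      apply ENNReal.ofReal_le_ofReal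
      have h1 : F a ≤ g a := hF.le_rightLim le_rfl
      have h2 : Function.leftLim g t ≤ F t := by
        apply le_of_tendsto (g.mono.tendsto_leftLim t)
        filter_upwards [Ioo_mem_nhdsLT_of_mem (Set.mem_Ioc.2 ⟨hat', le_rfl⟩)] with y hy
        calc g y = Function.rightLim F y := hF.stieltjesFunction_eq y
          _ ≤ F t := hF.rightLim_le hy.2
      linarith
    have hlhs : β t - β a = ∫ x in Set.Ioo a t, β' x := by
      have hicc : Set.uIcc a t ⊆ Set.Icc a c := by
        rw [Set.uIcc_of_le hat]; exact Set.Icc_subset_Icc le_rfl htc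
      have := intervalIntegral.integral_eq_sub_of_hasDerivAt
        (f := β) (f' := β') (a := a) (b := t)
        (fun x hx => hd x (hicc hx))
        ((hβ'cont.mono hicc).intervalIntegrable)
      rw [intervalIntegral.integral_of_le hat] at this
      rw [← this, MeasureTheory.integral_Ioc_eq_integral_Ioo]
    have hmeas : AEStronglyMeasurable β' (volume.restrict (Set.Ioo a t)) := by
      apply (hβ'cont.aestronglyMeasurable measurableSet_Icc).mono_measure
      exact Measure.restrict_mono (Set.Ioo_subset_Icc_self.trans
        (Set.Icc_subset_Icc le_rfl htc)) le_rfl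
    have hpos' : 0 ≤ᵐ[volume.restrict (Set.Ioo a t)] β' := by
      rw [EventuallyLE, ae_restrict_iff' measurableSet_Ioo]
      filter_upwards with x hx
      exact hβ'pos x ⟨hx.1.le, hx.2.le.trans htc⟩
    rw [hlhs, MeasureTheory.integral_eq_lintegral_of_nonneg_ae hpos' hmeas]
    calc (∫⁻ x in Set.Ioo a t, ENNReal.ofReal (β' x)).toReal
        ≤ (ENNReal.ofReal (F t - F a)).toReal :=
          ENNReal.toReal_mono ENNReal.ofReal_ne_top (hlint.trans hμIoo)
      _ ≤ F t - F a := by rw [ENNReal.toReal_ofReal (by linarith [hF hat] : (0:ℝ) ≤ F t - F a)]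
  have step3 : β t < F t := by linarith
  have step4 : F t ≤ β t := by
    refine le_of_forall_pos_le_add fun η hη => ?_
    have hcont : ContinuousAt β t := (hd t ⟨hat, htc⟩).continuousAt
    have : ∀ᶠ y in nhds t, β y < β t + η :=
      hcont.eventually_lt_const (by linarith)
    rcases Metric.eventually_nhds_iff.1 this with ⟨δ, hδ, hδ'⟩
    obtain ⟨x, hxS, hxlt⟩ := exists_lt_of_csInf_lt hSne (by linarith : sInf S < t + δ)
    have htx : t ≤ x := csInf_le hbdd hxS
    have h1 : F t ≤ F x := hF htx
    have hx2 : β x < β t + η := hδ' (by rw [Real.dist_eq, abs_lt]; constructor <;> linarith)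
    linarith [hxS.2]
  linarith

set_option maxHeartbeats 4000000 in
/-- The real-variable lemma of Section 5 converting the log-epiperimetric inequality
(with almost-minimality error `C₀ ρ^{α₀}`) into logarithmic decay of the energy density:
there is a constant `C > 0` depending only on `n, γ, ε, C₀, α₀` such that whenever
`f : (0, ρ̃] → [0, ∞)` is nondecreasing (`ρ̃ ∈ (0,1]`), `e(ρ) := f(ρ)/ρ^{n-4}`, and for
a.e. `ρ ∈ (0, ρ̃)` the function `f` is differentiable at `ρ` with
`f(ρ) ≤ (1 - ε |e(ρ) - C₀ρ^{α₀}|^γ) (ρ/(n-4)) f'(ρ) + C₀ ρ^{n-4+α₀}`,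
then `e(ρ) ≤ C (log(ρ̃/ρ))^{-1/γ}` on `(0, ρ̃/2]`. -/
theorem stmt_5 (n : ℕ) (hn : 5 ≤ n) (γ ε C₀ α₀ : ℝ)
    (hγ : γ ∈ Set.Ioo (0 : ℝ) 1) (hε : ε ∈ Set.Ioo (0 : ℝ) 1) (hC₀ : 0 < C₀)
    (hα₀ : 0 < α₀) :
    ∃ C : ℝ, 0 < C ∧
      ∀ R ∈ Set.Ioc (0 : ℝ) 1, ∀ f : ℝ → ℝ,
        (∀ ρ ∈ Set.Ioc (0 : ℝ) R, 0 ≤ f ρ) → MonotoneOn f (Set.Ioc 0 R) →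
        (∀ᵐ ρ ∂(volume : Measure ℝ), ρ ∈ Set.Ioo (0 : ℝ) R →
          DifferentiableAt ℝ f ρ ∧
            f ρ ≤ (1 - ε * |f ρ / ρ ^ (n - 4) - C₀ * ρ ^ α₀| ^ γ) * (ρ / ((n : ℝ) - 4))
                    * deriv f ρ
                  + C₀ * ρ ^ ((n : ℝ) - 4 + α₀)) →
        ∀ ρ ∈ Set.Ioc (0 : ℝ) (R / 2),
          f ρ / ρ ^ (n - 4) ≤ C * Real.log (R / ρ) ^ (-(1 / γ)) := by
  obtain ⟨hγ0, hγ1⟩ := hγ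
  obtain ⟨hε0, hε1⟩ := hε
  obtain ⟨k, hk_def⟩ : ∃ k : ℕ, k = ⌈1/γ⌉₊ + 1 := ⟨_, rfl⟩
  obtain ⟨M₂, hM₂_def⟩ : ∃ x : ℝ, x = 1 + (k ! : ℝ) / α₀ ^ k := ⟨_, rfl⟩
  obtain ⟨b, hb_def⟩ : ∃ x : ℝ, x = 1 + 2/(ε*γ) + 2*C₀*(1+2*α₀)*M₂/ε := ⟨_, rfl⟩
  obtain ⟨K, hK_def⟩ : ∃ x : ℝ, x = b ^ (2/γ) := ⟨_, rfl⟩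
  have hM₂1 : 1 ≤ M₂ := by rw [hM₂_def]; exact le_add_of_nonneg_right (by positivity)
  have hM₂0 : 0 < M₂ := lt_of_lt_of_le one_pos hM₂1
  have hqk : 1/γ + 1 ≤ (k : ℝ) := by
    rw [hk_def]; push_cast; linarith [Nat.le_ceil (1/γ)]
  have hb1 : 1 ≤ b := by
    have h1 : 0 ≤ 2/(ε*γ) := by positivity
    have h2 : 0 ≤ 2*C₀*(1+2*α₀)*M₂/ε := by positivity
    rw [hb_def]; linarith
  have hK1 : 1 ≤ K := by rw [hK_def]; exact Real.one_le_rpow hb1 (by positivity)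
  have hKpos : 0 < K := lt_of_lt_of_le one_pos hK1
  have hbb : ∀ p : ℝ, 1 ≤ p → b ≤ b ^ p := fun p hp => by
    calc b = b ^ (1:ℝ) := (Real.rpow_one b).symm
      _ ≤ b ^ p := Real.rpow_le_rpow_of_exponent_le hb1 hp
  have hKγ : 2/(ε*γ) ≤ K ^ γ := by
    have h1 : K ^ γ = b ^ ((2/γ)*γ) := by
      rw [hK_def, ← Real.rpow_mul (by linarith : (0:ℝ) ≤ b)]
    have h2 : (2/γ)*γ = 2 := by field_simp
    rw [h1, h2]
    refine le_trans ?_ (hbb 2 one_le_two)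
    have h2' : 0 ≤ 2*C₀*(1+2*α₀)*M₂/ε := by positivity
    rw [hb_def]; linarith
  have hK1γ : 2*C₀*(1+2*α₀)*M₂/ε ≤ K ^ (1+γ) := by
    have h1 : K ^ ((1:ℝ)+γ) = b ^ ((2/γ)*(1+γ)) := by
      rw [hK_def, ← Real.rpow_mul (by linarith : (0:ℝ) ≤ b)]
    have h2 : (1:ℝ) ≤ (2/γ)*(1+γ) := by
      rw [div_mul_eq_mul_div, le_div_iff₀ hγ0]; nlinarith
    rw [h1]
    refine le_trans ?_ (hbb _ h2)
    have h1' : 0 ≤ 2/(ε*γ) := by positivity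
    rw [hb_def]; linarith
  have hKsplit : K ^ ((1:ℝ)+γ) = K * K ^ γ := by
    rw [Real.rpow_add hKpos, Real.rpow_one]
  have h4n : (4:ℕ) ≤ n := by omega
  have hmc : ((n:ℝ) - 4) = ((n - 4 : ℕ) : ℝ) := by
    rw [Nat.cast_sub h4n]; norm_num
  have hm1 : (1:ℝ) ≤ ((n - 4 : ℕ) : ℝ) := by
    have : 1 ≤ n - 4 := by omega
    exact_mod_cast this
  have hn45 : n - 5 + 1 = n - 4 := by omega
  obtain ⟨C, hC_def⟩ : ∃ x : ℝ, x = 2*C₀*M₂ + K * (2:ℝ)^(1/γ) + 1 := ⟨_, rfl⟩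
  have h2γpos : (0:ℝ) < (2:ℝ)^(1/γ) := Real.rpow_pos_of_pos two_pos _
  have hCpos : 0 < C := by
    rw [hC_def]
    have h1 : 0 < 2*C₀*M₂ := by positivity
    nlinarith [mul_pos hKpos h2γpos]
  refine ⟨C, hCpos, ?_⟩
  rintro R ⟨hR0, hR1⟩ f hf0 hfmono h_ae ρ ⟨ha0, haR2⟩
  have haR : ρ < R := lt_of_le_of_lt haR2 (by linarith)
  obtain ⟨L, hL_def⟩ : ∃ x : ℝ, x = Real.log (R/ρ) := ⟨_, rfl⟩
  have hL2 : Real.log 2 ≤ L := by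
    rw [hL_def]
    exact Real.log_le_log two_pos ((le_div_iff₀ ha0).2 (by linarith))
  have hL0 : 0 < L := lt_of_lt_of_le (Real.log_pos one_lt_two) hL2
  rw [← hL_def]
  by_contra hcon
  push_neg at hcon
  have hLg : 0 < L ^ (-(1/γ)) := Real.rpow_pos_of_pos hL0 _
  have heL : ρ * Real.exp L = R := by
    rw [hL_def, Real.exp_log (by positivity)]; field_simp
  obtain ⟨τ, hτ_def⟩ : ∃ x : ℝ, x = L/2 := ⟨_, rfl⟩
  have hτ0 : 0 < τ := by rw [hτ_def]; linarith
  obtain ⟨ρb, hρb_def⟩ : ∃ x : ℝ, x = ρ * Real.exp τ := ⟨_, rfl⟩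
  have hρb0 : 0 < ρb := by rw [hρb_def]; positivity
  have hρbR : ρb < R := by
    rw [← heL, hρb_def]
    exact mul_lt_mul_of_pos_left (Real.exp_lt_exp.2 (by rw [hτ_def]; linarith)) ha0
  have hρb1 : ρb ≤ 1 := hρbR.le.trans hR1
  have haρb : ρ < ρb := by
    rw [hρb_def]
    have h1 : Real.exp 0 < Real.exp τ := Real.exp_lt_exp.2 hτ0
    rw [Real.exp_zero] at h1
    exact (lt_mul_iff_one_lt_right ha0).2 h1
  obtain ⟨s, hs_def⟩ : ∃ s : ℝ → ℝ, ∀ x, s x = τ + Real.log ρ - Real.log x :=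
    ⟨_, fun _ => rfl⟩
  have hsρ : s ρ = τ := by rw [hs_def]; ring
  have hlogρb : Real.log ρb = Real.log ρ + τ := by
    rw [hρb_def, Real.log_mul ha0.ne' (Real.exp_pos τ).ne', Real.log_exp]
  have hs_pos : ∀ x, 0 < x → x < ρb → 0 < s x := by
    intro x hx0 hxρb
    have := Real.log_lt_log hx0 hxρb
    rw [hlogρb] at this
    rw [hs_def]; linarith
  obtain ⟨β, hβ_def⟩ : ∃ g : ℝ → ℝ, ∀ x,
      g x = 2*C₀*(x^(n-4) * x^α₀) + K*(x^(n-4) * (s x)^(-(1/γ))) := ⟨_, fun _ => rfl⟩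
  obtain ⟨Φ, hΦ_def⟩ : ∃ g : ℝ → ℝ, ∀ x,
      g x = 2*C₀*(((n-4:ℕ):ℝ)+α₀)*x^α₀
        + K*(((n-4:ℕ):ℝ)*(s x)^(-(1/γ)) + (1/γ)*(s x)^(-(1/γ)-1)) := ⟨_, fun _ => rfl⟩
  obtain ⟨β', hβ'_def⟩ : ∃ g : ℝ → ℝ, ∀ x, g x = x^(n-5) * Φ x := ⟨_, fun _ => rfl⟩
  -- the clamped monotone extension of f
  obtain ⟨F, hF_def⟩ : ∃ g : ℝ → ℝ, ∀ x, g x = f (min (max x ρ) R) := ⟨_, fun _ => rfl⟩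
  have hmemclamp : ∀ x : ℝ, min (max x ρ) R ∈ Set.Ioc 0 R := fun x =>
    ⟨lt_min (lt_of_lt_of_le ha0 (le_max_right x ρ)) hR0, min_le_right _ _⟩
  have hFmono : Monotone F := fun x y hxy => by
    rw [hF_def, hF_def]
    exact hfmono (hmemclamp x) (hmemclamp y)
      (min_le_min (max_le_max hxy le_rfl) le_rfl)
  have hFeqf : Set.EqOn F f (Set.Ioo ρ R) := by
    intro y hy
    rw [hF_def, max_eq_left hy.1.le, min_eq_left hy.2.le]
  have hFρ : F ρ = f ρ := by
    rw [hF_def, max_self, min_eq_left haR.le]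
  -- choice of the endpoint c
  have hfR0 : 0 ≤ f R := hf0 R ⟨hR0, le_rfl⟩
  have hρm0 : (0:ℝ) < ρ^(n-4) := pow_pos ha0 _
  obtain ⟨W, hW_def⟩ : ∃ x : ℝ, x = (f R + 1)/(K * ρ^(n-4)) := ⟨_, rfl⟩
  have hW0 : 0 < W := by rw [hW_def]; positivity
  obtain ⟨s₀, hs₀_def⟩ : ∃ x : ℝ, x = min (τ/2) (W^(-γ)) := ⟨_, rfl⟩
  have hs₀0 : 0 < s₀ := by
    rw [hs₀_def]; exact lt_min (by linarith) (Real.rpow_pos_of_pos hW0 _)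
  have hs₀τ : s₀ ≤ τ/2 := by rw [hs₀_def]; exact min_le_left _ _
  obtain ⟨c, hc_def⟩ : ∃ x : ℝ, x = ρ * Real.exp (τ - s₀) := ⟨_, rfl⟩
  have hc0 : 0 < c := by rw [hc_def]; positivity
  have hca : ρ < c := by
    rw [hc_def]
    have h1 : Real.exp 0 < Real.exp (τ - s₀) := Real.exp_lt_exp.2 (by linarith)
    rw [Real.exp_zero] at h1
    exact (lt_mul_iff_one_lt_right ha0).2 h1
  have hcρb : c < ρb := by
    rw [hc_def, hρb_def]
    exact mul_lt_mul_of_pos_left (Real.exp_lt_exp.2 (by linarith)) ha0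
  have hcR : c < R := hcρb.trans hρbR
  have hsc : s c = s₀ := by
    rw [hs_def, hc_def, Real.log_mul ha0.ne' (Real.exp_pos _).ne', Real.log_exp]; ring
  have hs_lb : ∀ x, ρ ≤ x → x ≤ c → s₀ ≤ s x := by
    intro x hx1 hx2
    have hx0 : 0 < x := lt_of_lt_of_le ha0 hx1
    have := Real.log_le_log hx0 hx2
    rw [← hsc, hs_def, hs_def]; linarith
  -- derivative of the barrier
  have hd : ∀ x ∈ Set.Icc ρ c, HasDerivAt β (β' x) x := by
    intro x hx
    have hx0 : 0 < x := lt_of_lt_of_le ha0 hx.1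
    have hxρb : x < ρb := lt_of_le_of_lt hx.2 hcρb
    have hsx : 0 < s x := hs_pos x hx0 hxρb
    have h1 : HasDerivAt (fun y : ℝ => y ^ (n-4)) (((n-4:ℕ):ℝ) * x^(n-5)) x := by
      have := hasDerivAt_pow (n-4) x
      rw [show n-4-1 = n-5 by omega] at this
      exact this
    have h2 : HasDerivAt (fun y : ℝ => y ^ α₀) (α₀ * x^(α₀-1)) x :=
      Real.hasDerivAt_rpow_const (Or.inl hx0.ne')
    have hsfun : s = fun y => τ + Real.log ρ - Real.log y := funext hs_def
    have h3 : HasDerivAt s (-x⁻¹) x := by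
      have h := HasDerivAt.const_sub (τ + Real.log ρ) (Real.hasDerivAt_log hx0.ne')
      rw [hsfun]
      exact h
    have h4 : HasDerivAt (fun y => (s y) ^ (-(1/γ)))
        ((-(1/γ)) * (s x)^(-(1/γ)-1) * -x⁻¹) x := by
      have hr := Real.hasDerivAt_rpow_const (x := s x) (p := -(1/γ)) (Or.inl hsx.ne')
      exact hr.comp x h3
    have h5 := (((h1.mul h2).const_mul (2*C₀))).add ((h1.mul h4).const_mul K)
    have hβfun : β = fun y => 2*C₀*(y^(n-4) * y^α₀) + K*(y^(n-4) * (s y)^(-(1/γ))) :=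
      funext hβ_def
    rw [hβfun, hβ'_def, hΦ_def]
    convert h5 using 1
    on_goal 1 => rfl
    on_goal 1 => rfl
    on_goal 1 => rfl
    have hxm : x^(n-4) = x^(n-5) * x := by rw [← pow_succ, hn45]
    have hxα : x ^ (α₀-1) = x^α₀ / x := by
      rw [Real.rpow_sub_one hx0.ne']
    rw [hxm, hxα]
    field_simp
  -- nonnegativity of the barrier derivative
  have hβ'pos : ∀ x ∈ Set.Icc ρ c, 0 ≤ β' x := by
    intro x hx
    have hx0 : 0 < x := lt_of_lt_of_le ha0 hx.1
    have hsx : 0 < s x := hs_pos x hx0 (lt_of_le_of_lt hx.2 hcρb)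
    rw [hβ'_def, hΦ_def]
    have e1 : (0:ℝ) ≤ x^α₀ := Real.rpow_nonneg hx0.le _
    have e2 : (0:ℝ) ≤ (s x)^(-(1/γ)) := Real.rpow_nonneg hsx.le _
    have e3 : (0:ℝ) ≤ (s x)^(-(1/γ)-1) := Real.rpow_nonneg hsx.le _
    have e4 : (0:ℝ) ≤ ((n-4:ℕ):ℝ) := by linarith
    apply mul_nonneg (pow_nonneg hx0.le _)
    apply add_nonneg
    · exact mul_nonneg (mul_nonneg (by linarith) (by linarith)) e1
    · exact mul_nonneg hKpos.le
        (add_nonneg (mul_nonneg e4 e2) (mul_nonneg (div_nonneg zero_le_one hγ0.le) e3))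
  -- continuity of the barrier derivative
  have hβ'cont : ContinuousOn β' (Set.Icc ρ c) := by
    intro x hx
    have hx0 : 0 < x := lt_of_lt_of_le ha0 hx.1
    have hsx : 0 < s x := hs_pos x hx0 (lt_of_le_of_lt hx.2 hcρb)
    apply ContinuousAt.continuousWithinAt
    have hfun : β' = fun y => y^(n-5) * (2*C₀*(((n-4:ℕ):ℝ)+α₀)*y^α₀
        + K*(((n-4:ℕ):ℝ)*(s y)^(-(1/γ)) + (1/γ)*(s y)^(-(1/γ)-1))) := by
      funext y; rw [hβ'_def, hΦ_def]
    rw [hfun]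
    have hsfun : s = fun y => τ + Real.log ρ - Real.log y := funext hs_def
    have hcs : ContinuousAt s x := by
      rw [hsfun]
      exact continuousAt_const.sub (Real.continuousAt_log hx0.ne')
    have c1 : ContinuousAt (fun y : ℝ => y ^ α₀) x :=
      Real.continuousAt_rpow_const x α₀ (Or.inl hx0.ne')
    have c2 : ContinuousAt (fun y => (s y)^(-(1/γ))) x :=
      (Real.continuousAt_rpow_const (s x) _ (Or.inl hsx.ne')).comp hcs
    have c3 : ContinuousAt (fun y => (s y)^(-(1/γ)-1)) x :=
      (Real.continuousAt_rpow_const (s x) _ (Or.inl hsx.ne')).comp hcs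
    exact (continuous_pow _).continuousAt.mul
      (((continuousAt_const.mul c1)).add (continuousAt_const.mul
        ((continuousAt_const.mul c2).add (continuousAt_const.mul c3))))
  -- initial condition: the barrier starts below f
  have hρa : ρ ≤ Real.exp (-L) := by
    have h1 : ρ = R * Real.exp (-L) := by
      rw [← heL, Real.exp_neg]; field_simp
    rw [h1]
    calc R * Real.exp (-L) ≤ 1 * Real.exp (-L) :=
          mul_le_mul_of_nonneg_right hR1 (Real.exp_pos _).le
      _ = Real.exp (-L) := one_mul _
  have hAρ : ρ^α₀ ≤ M₂ * L^(-(1/γ)) := by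
    have h1 : ρ^α₀ ≤ (Real.exp (-L))^α₀ := Real.rpow_le_rpow ha0.le hρa hα₀.le
    have h2 : (Real.exp (-L))^α₀ = Real.exp (-(α₀*L)) := by
      rw [← Real.exp_mul]; ring_nf
    have h3 : L^(1/γ) * Real.exp (-(α₀*L)) ≤ M₂ := by
      rw [hM₂_def]
      exact poly_exp_bound k hα₀ (div_nonneg zero_le_one hγ0.le) (by linarith) hL0
    have h4 : L^(1/γ) * L^(-(1/γ)) = 1 := by
      rw [← Real.rpow_add hL0]; norm_num
    have h5 : Real.exp (-(α₀*L)) ≤ M₂ * L^(-(1/γ)) := by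
      calc Real.exp (-(α₀*L)) = Real.exp (-(α₀*L)) * (L^(1/γ) * L^(-(1/γ))) := by
            rw [h4, mul_one]
        _ = (L^(1/γ) * Real.exp (-(α₀*L))) * L^(-(1/γ)) := by ring
        _ ≤ M₂ * L^(-(1/γ)) := mul_le_mul_of_nonneg_right h3 hLg.le
    rw [h2] at h1
    exact h1.trans h5
  have hτL : τ^(-(1/γ)) = (2:ℝ)^(1/γ) * L^(-(1/γ)) := by
    rw [hτ_def, Real.div_rpow hL0.le (by norm_num : (0:ℝ) ≤ 2),
      Real.rpow_neg (by norm_num : (0:ℝ) ≤ 2) (1/γ), div_eq_mul_inv, inv_inv, mul_comm]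
  have h0 : β ρ < F ρ := by
    rw [hβ_def, hFρ, hsρ]
    have hconρ : C * L^(-(1/γ)) * ρ^(n-4) < f ρ := (lt_div_iff₀ hρm0).1 hcon
    have hstep : 2*C₀*ρ^α₀ + K*τ^(-(1/γ)) < C * L^(-(1/γ)) := by
      rw [hτL, hC_def]
      have h1 : 2*C₀*ρ^α₀ ≤ 2*C₀*(M₂ * L^(-(1/γ))) :=
        mul_le_mul_of_nonneg_left hAρ (by linarith)
      linarith [hLg]
    calc 2*C₀*(ρ^(n-4) * ρ^α₀) + K*(ρ^(n-4) * τ^(-(1/γ)))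
        = (2*C₀*ρ^α₀ + K*τ^(-(1/γ))) * ρ^(n-4) := by ring
      _ < (C * L^(-(1/γ))) * ρ^(n-4) := mul_lt_mul_of_pos_right hstep hρm0
      _ < f ρ := hconρ
  -- the barrier exceeds f at c
  have hFc : F c < β c := by
    have hFceq : F c = f c := hFeqf ⟨hca, hcR⟩
    have hfc : f c ≤ f R := hfmono ⟨hc0, hcR.le⟩ ⟨hR0, le_rfl⟩ hcR.le
    have hs₀W : W ≤ s₀^(-(1/γ)) := by
      have h1 : s₀ ≤ W^(-γ) := by rw [hs₀_def]; exact min_le_right _ _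
      have h2 := Real.rpow_le_rpow_of_nonpos hs₀0 h1
        (neg_nonpos.mpr (one_div_nonneg.mpr hγ0.le))
      have h3 : (W^(-γ))^(-(1/γ)) = W := by
        rw [← Real.rpow_mul hW0.le, show (-γ)*(-(1/γ)) = 1 from by field_simp,
          Real.rpow_one]
      rw [h3] at h2
      exact h2
    have hKcs : f R + 1 ≤ K * (c^(n-4) * s₀^(-(1/γ))) := by
      have h1 : ρ^(n-4) ≤ c^(n-4) := pow_le_pow_left₀ ha0.le hca.le _
      have h2 : K * (ρ^(n-4) * W) = f R + 1 := by
        rw [hW_def]; field_simp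
      calc f R + 1 = K * (ρ^(n-4) * W) := h2.symm
        _ ≤ K * (c^(n-4) * s₀^(-(1/γ))) := by
            apply mul_le_mul_of_nonneg_left _ hKpos.le
            exact mul_le_mul h1 hs₀W hW0.le (pow_nonneg hc0.le _)
    rw [hFceq, hβ_def, hsc]
    have hpos : (0:ℝ) ≤ 2*C₀*(c^(n-4)*c^α₀) :=
      mul_nonneg (by linarith) (mul_nonneg (pow_nonneg hc0.le _) (Real.rpow_nonneg hc0.le _))
    linarith
  -- the key differential inequality
  have hkey : ∀ᵐ x ∂(volume : Measure ℝ), x ∈ Set.Ioo ρ c → β x ≤ F x →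
      β' x ≤ deriv F x := by
    filter_upwards [h_ae] with x hx hxmem hβF
    have hx0 : 0 < x := lt_trans ha0 hxmem.1
    have hxρb : x < ρb := lt_trans hxmem.2 hcρb
    have hxR : x < R := lt_trans hxρb hρbR
    have hsx : 0 < s x := hs_pos x hx0 hxρb
    obtain ⟨hdiff, hineq⟩ := hx ⟨hx0, hxR⟩
    have hFf : F =ᶠ[nhds x] f :=
      Filter.eventuallyEq_of_mem (isOpen_Ioo.mem_nhds (⟨hxmem.1, hxR⟩ : x ∈ Set.Ioo ρ R))
        hFeqf
    have hder : deriv F x = deriv f x := hFf.deriv_eq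
    have hD0 : 0 ≤ deriv f x := by rw [← hder]; exact mono_deriv_nonneg_s5 hFmono x
    rw [hder]
    have hFx : β x ≤ f x := by
      rw [← hFeqf (⟨hxmem.1, hxR⟩ : x ∈ Set.Ioo ρ R)]; exact hβF
    have hxm0 : (0:ℝ) < x^(n-4) := pow_pos hx0 _
    obtain ⟨g, hg_def⟩ : ∃ v : ℝ, v = f x / x^(n-4) - C₀ * x ^ α₀ := ⟨_, rfl⟩
    have hu1pos : 0 < (s x)^(-(1/γ)) := Real.rpow_pos_of_pos hsx _
    have hu2pos : 0 < (s x)^(-(1/γ)-1) := Real.rpow_pos_of_pos hsx _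
    have hwpos : 0 < x^α₀ := Real.rpow_pos_of_pos hx0 _
    have hg_lb : C₀*x^α₀ + K*(s x)^(-(1/γ)) ≤ g := by
      rw [hg_def, le_sub_iff_add_le, le_div_iff₀ hxm0]
      rw [hβ_def] at hFx
      linarith [hFx]
    have hg0 : 0 < g :=
      lt_of_lt_of_le (add_pos (mul_pos hC₀ hwpos) (mul_pos hKpos hu1pos)) hg_lb
    have habs : |f x / x^(n-4) - C₀ * x ^ α₀| = g := by
      have h := hg0
      rw [hg_def] at h
      rw [abs_of_pos h, hg_def]
    rw [habs, hmc] at hineq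
    have hxpow : x ^ (((n-4:ℕ):ℝ) + α₀) = x^(n-4) * x^α₀ := by
      rw [Real.rpow_add hx0, Real.rpow_natCast]
    rw [hxpow] at hineq
    have hM0 : (0:ℝ) < ((n-4:ℕ):ℝ) := by linarith
    have hgγpos : 0 < g^γ := Real.rpow_pos_of_pos hg0 _
    have hfxg : x^(n-4) * g = f x - C₀*(x^(n-4)*x^α₀) := by
      rw [hg_def]; field_simp
    have h1γ : 0 < 1 - ε*g^γ := by
      by_contra hcontra
      push_neg at hcontra
      have hxD : 0 ≤ x / ((n-4:ℕ):ℝ) * deriv f x :=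
        mul_nonneg (div_nonneg hx0.le hM0.le) hD0
      have hnp : (1 - ε*g^γ) * (x/((n-4:ℕ):ℝ)) * deriv f x ≤ 0 := by
        rw [mul_assoc]
        exact mul_nonpos_iff.2 (Or.inr ⟨hcontra, hxD⟩)
      have hfle : f x ≤ C₀*(x^(n-4)*x^α₀) := by linarith
      have hgle : x^(n-4) * g ≤ 0 := by rw [hfxg]; linarith
      exact absurd hgle (not_le.2 (mul_pos hxm0 hg0))
    have hmain : x^(n-4) * g ≤ (1 - ε*g^γ) * (x/((n-4:ℕ):ℝ)) * deriv f x := by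
      rw [hfxg]; linarith
    have hg1γ : g^((1:ℝ)+γ) = g * g^γ := by rw [Real.rpow_add hg0, Real.rpow_one]
    have hstep : ((n-4:ℕ):ℝ) * x^(n-5) * (g + ε*g^((1:ℝ)+γ)) ≤ deriv f x := by
      have hA : x^(n-4) * (g + ε*g^((1:ℝ)+γ)) * (1 - ε*g^γ) ≤ x^(n-4) * g := by
        rw [hg1γ]
        have e : x^(n-4) * (g + ε*(g*g^γ)) * (1 - ε*g^γ)
            = x^(n-4)*g - x^(n-4)*g*(ε*g^γ)^2 := by ring
        rw [e]
        have hnn : 0 ≤ x^(n-4)*g*(ε*g^γ)^2 :=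
          mul_nonneg (mul_nonneg hxm0.le hg0.le) (sq_nonneg _)
        linarith
      have hB : x^(n-4) * (g + ε*g^((1:ℝ)+γ)) ≤ (x/((n-4:ℕ):ℝ)) * deriv f x := by
        have h2 : x^(n-4) * (g + ε*g^((1:ℝ)+γ)) * (1 - ε*g^γ)
            ≤ ((x/((n-4:ℕ):ℝ)) * deriv f x) * (1 - ε*g^γ) := by
          calc x^(n-4) * (g + ε*g^((1:ℝ)+γ)) * (1 - ε*g^γ) ≤ x^(n-4) * g := hA
            _ ≤ (1 - ε*g^γ) * (x/((n-4:ℕ):ℝ)) * deriv f x := hmain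
            _ = ((x/((n-4:ℕ):ℝ)) * deriv f x) * (1 - ε*g^γ) := by ring
        exact le_of_mul_le_mul_right h2 h1γ
      have hxm : x^(n-4) = x^(n-5) * x := by rw [← pow_succ, hn45]
      rw [hxm] at hB
      have h3 := mul_le_mul_of_nonneg_left hB (le_of_lt hM0)
      have h4 : ((n-4:ℕ):ℝ) * (x/((n-4:ℕ):ℝ) * deriv f x) = x * deriv f x := by
        rw [show ((n-4:ℕ):ℝ) * (x/((n-4:ℕ):ℝ) * deriv f x)
            = (((n-4:ℕ):ℝ)/((n-4:ℕ):ℝ)) * (x * deriv f x) from by ring,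
          div_self (ne_of_gt hM0), one_mul]
      rw [h4] at h3
      refine le_of_mul_le_mul_right ?_ hx0
      calc ((n-4:ℕ):ℝ) * x^(n-5) * (g + ε*g^((1:ℝ)+γ)) * x
          = ((n-4:ℕ):ℝ) * (x^(n-5) * x * (g + ε*g^((1:ℝ)+γ))) := by ring
        _ ≤ x * deriv f x := h3
        _ = deriv f x * x := mul_comm _ _
    -- comparison of Φ with the growth term
    have hwu2 : x^α₀ * (s x)^(1+1/γ) ≤ M₂ := by
      have hlogx : Real.log x = Real.log ρ + τ - s x := by rw [hs_def]; ring
      have hxαe : x^α₀ = ρb^α₀ * Real.exp (-(α₀ * s x)) := by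
        rw [Real.rpow_def_of_pos hx0, Real.rpow_def_of_pos hρb0, ← Real.exp_add,
          hlogρb, hlogx]
        ring_nf
      have hρbα : ρb^α₀ ≤ 1 := Real.rpow_le_one hρb0.le hρb1 hα₀.le
      have hpe : (s x)^(1+1/γ) * Real.exp (-(α₀ * s x)) ≤ M₂ := by
        rw [hM₂_def]
        exact poly_exp_bound k hα₀ (by positivity) (by linarith) hsx
      calc x^α₀ * (s x)^(1+1/γ)
          = ρb^α₀ * ((s x)^(1+1/γ) * Real.exp (-(α₀ * s x))) := by rw [hxαe]; ring
        _ ≤ 1 * M₂ := mul_le_mul hρbα hpe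
            (mul_nonneg (Real.rpow_nonneg hsx.le _) (Real.exp_pos _).le) one_pos.le
        _ = M₂ := one_mul _
    have hu2s : (s x)^(1+1/γ) * (s x)^(-(1/γ)-1) = 1 := by
      rw [← Real.rpow_add hsx, show 1 + 1/γ + (-(1/γ)-1) = 0 from by ring,
        Real.rpow_zero]
    have hw_le : x^α₀ ≤ M₂ * (s x)^(-(1/γ)-1) := by
      calc x^α₀ = x^α₀ * ((s x)^(1+1/γ) * (s x)^(-(1/γ)-1)) := by rw [hu2s, mul_one]
        _ = (x^α₀ * (s x)^(1+1/γ)) * (s x)^(-(1/γ)-1) := by ring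
        _ ≤ M₂ * (s x)^(-(1/γ)-1) := mul_le_mul_of_nonneg_right hwu2 hu2pos.le
    have hgK : K^((1:ℝ)+γ) * (s x)^(-(1/γ)-1) ≤ g^((1:ℝ)+γ) := by
      have h1 : K * (s x)^(-(1/γ)) ≤ g := by linarith [mul_pos hC₀ hwpos]
      have h2 : (K * (s x)^(-(1/γ)))^((1:ℝ)+γ) ≤ g^((1:ℝ)+γ) :=
        Real.rpow_le_rpow (mul_nonneg hKpos.le hu1pos.le) h1 (by linarith)
      have h3 : ((s x)^(-(1/γ)))^((1:ℝ)+γ) = (s x)^(-(1/γ)-1) := by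
        rw [← Real.rpow_mul hsx.le]
        congr 1
        field_simp
        ring
      calc K^((1:ℝ)+γ) * (s x)^(-(1/γ)-1)
          = (K * (s x)^(-(1/γ)))^((1:ℝ)+γ) := by
            rw [Real.mul_rpow hKpos.le hu1pos.le, h3]
        _ ≤ g^((1:ℝ)+γ) := h2
    have hMε2 : (0:ℝ) ≤ ((n-4:ℕ):ℝ)*ε/2 := by positivity
    have hΦle : Φ x ≤ ((n-4:ℕ):ℝ) * (g + ε*g^((1:ℝ)+γ)) := by
      rw [hΦ_def]
      have t1 : ((n-4:ℕ):ℝ)*(C₀*x^α₀) + ((n-4:ℕ):ℝ)*(K*(s x)^(-(1/γ)))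
          ≤ ((n-4:ℕ):ℝ)*g := by
        have := mul_le_mul_of_nonneg_left hg_lb hM0.le
        linarith
      have t2 : (K*(1/γ)) * (s x)^(-(1/γ)-1)
          ≤ (((n-4:ℕ):ℝ)*ε/2) * (K^((1:ℝ)+γ) * (s x)^(-(1/γ)-1)) := by
        have u : K*(1/γ) ≤ (((n-4:ℕ):ℝ)*ε/2) * K^((1:ℝ)+γ) := by
          rw [hKsplit]
          have u2 : (((n-4:ℕ):ℝ)*ε/2) * K * (2/(ε*γ)) = ((n-4:ℕ):ℝ)*K*(1/γ) := by
            field_simp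
          have u3 := mul_le_mul_of_nonneg_left hKγ
            (mul_nonneg hMε2 hKpos.le)
          rw [show (((n-4:ℕ):ℝ)*ε/2) * K * (2/(ε*γ)) = (((n-4:ℕ):ℝ)*ε/2 * K) * (2/(ε*γ))
            from by ring] at u2
          have u4 : K*(1/γ) ≤ ((n-4:ℕ):ℝ)*K*(1/γ) := by
            have hnn : (0:ℝ) ≤ K*(1/γ) := mul_nonneg hKpos.le (by positivity)
            calc K*(1/γ) = 1*(K*(1/γ)) := (one_mul _).symm
              _ ≤ ((n-4:ℕ):ℝ)*(K*(1/γ)) := mul_le_mul_of_nonneg_right hm1 hnn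
              _ = ((n-4:ℕ):ℝ)*K*(1/γ) := by ring
          calc K*(1/γ) ≤ ((n-4:ℕ):ℝ)*K*(1/γ) := u4
            _ = (((n-4:ℕ):ℝ)*ε/2 * K) * (2/(ε*γ)) := u2.symm
            _ ≤ (((n-4:ℕ):ℝ)*ε/2 * K) * K^γ := u3
            _ = ((n-4:ℕ):ℝ)*ε/2 * (K * K^γ) := by ring
        calc (K*(1/γ)) * (s x)^(-(1/γ)-1)
            ≤ ((((n-4:ℕ):ℝ)*ε/2) * K^((1:ℝ)+γ)) * (s x)^(-(1/γ)-1) :=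
              mul_le_mul_of_nonneg_right u hu2pos.le
          _ = (((n-4:ℕ):ℝ)*ε/2) * (K^((1:ℝ)+γ) * (s x)^(-(1/γ)-1)) := by ring
      have t3 : C₀*(((n-4:ℕ):ℝ)+2*α₀) * x^α₀
          ≤ (((n-4:ℕ):ℝ)*ε/2) * (K^((1:ℝ)+γ) * (s x)^(-(1/γ)-1)) := by
        have u1 : C₀*(((n-4:ℕ):ℝ)+2*α₀) ≤ ((n-4:ℕ):ℝ)*C₀*(1+2*α₀) := by
          linarith [mul_nonneg (mul_nonneg hC₀.le hα₀.le) (sub_nonneg.2 hm1)]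
        have u2 : C₀*(((n-4:ℕ):ℝ)+2*α₀) * x^α₀
            ≤ (((n-4:ℕ):ℝ)*C₀*(1+2*α₀)*M₂) * (s x)^(-(1/γ)-1) := by
          calc C₀*(((n-4:ℕ):ℝ)+2*α₀) * x^α₀
              ≤ C₀*(((n-4:ℕ):ℝ)+2*α₀) * (M₂ * (s x)^(-(1/γ)-1)) :=
                mul_le_mul_of_nonneg_left hw_le (by positivity)
            _ ≤ (((n-4:ℕ):ℝ)*C₀*(1+2*α₀)) * (M₂ * (s x)^(-(1/γ)-1)) :=
                mul_le_mul_of_nonneg_right u1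
                  (mul_nonneg hM₂0.le hu2pos.le)
            _ = (((n-4:ℕ):ℝ)*C₀*(1+2*α₀)*M₂) * (s x)^(-(1/γ)-1) := by ring
        have u3 : ((n-4:ℕ):ℝ)*C₀*(1+2*α₀)*M₂ ≤ (((n-4:ℕ):ℝ)*ε/2)*K^((1:ℝ)+γ) := by
          have := mul_le_mul_of_nonneg_left hK1γ hMε2
          have e : ((n-4:ℕ):ℝ)*ε/2 * (2*C₀*(1+2*α₀)*M₂/ε) = ((n-4:ℕ):ℝ)*C₀*(1+2*α₀)*M₂ := by
            field_simp
          linarith [e ▸ this]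
        calc C₀*(((n-4:ℕ):ℝ)+2*α₀) * x^α₀
            ≤ (((n-4:ℕ):ℝ)*C₀*(1+2*α₀)*M₂) * (s x)^(-(1/γ)-1) := u2
          _ ≤ ((((n-4:ℕ):ℝ)*ε/2)*K^((1:ℝ)+γ)) * (s x)^(-(1/γ)-1) :=
              mul_le_mul_of_nonneg_right u3 hu2pos.le
          _ = (((n-4:ℕ):ℝ)*ε/2) * (K^((1:ℝ)+γ) * (s x)^(-(1/γ)-1)) := by ring
      have t4 : (((n-4:ℕ):ℝ)*ε/2) * (K^((1:ℝ)+γ) * (s x)^(-(1/γ)-1))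
          ≤ (((n-4:ℕ):ℝ)*ε/2) * g^((1:ℝ)+γ) :=
        mul_le_mul_of_nonneg_left hgK hMε2
      linarith [t1, t2, t3, t4]
    calc β' x = x^(n-5) * Φ x := hβ'_def x
      _ ≤ x^(n-5) * (((n-4:ℕ):ℝ) * (g + ε*g^((1:ℝ)+γ))) :=
          mul_le_mul_of_nonneg_left hΦle (pow_nonneg hx0.le _)
      _ = ((n-4:ℕ):ℝ) * x^(n-5) * (g + ε*g^((1:ℝ)+γ)) := by ring
      _ ≤ deriv f x := hstep
  have hcross := crossing hca.le hFmono hd hβ'pos hβ'cont hkey h0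
  linarith [hFc, hcross]
end

section
/- Let n ≥ 1 be an integer, ρ₀ > 0, h : ℝ^n → [0, ∞] Lebesgue measurable, φ : (0, ρ₀) → (0, ∞) nondecreasing, and C > 0. Assume that for all 0 < σ < ρ < ρ₀ one has ∫_{{σ < ‖x‖ < ρ}} ‖x‖^{2−n} · h(x) dx ≤ C · ( log(ρ/σ) · φ(ρ) )^{1/2}. Then there exists a constant C′ > 0, depending only on C, such that for every ρ ∈ (0, ρ₀/2): ∫_{{0 < ‖x‖ < ρ}} ‖x‖^{2−n} · h(x) dx ≤ C′ · ∫₀^{2ρ} (φ(t)^{1/2}/t) dt (where both sides may equal +∞). -/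
open MeasureTheory

/-- Dyadic-decomposition estimate (equation (A.5) in the appendix): if for all
`0 < σ < ρ < ρ₀` one has `∫_{σ<‖x‖<ρ} ‖x‖^{2-n} h ≤ C (log(ρ/σ) φ(ρ))^{1/2}` with `φ`
positive and nondecreasing on `(0, ρ₀)`, then there is `C' > 0`, depending only on `C`,
such that `∫_{0<‖x‖<ρ} ‖x‖^{2-n} h ≤ C' ∫₀^{2ρ} φ(t)^{1/2}/t dt` for every
`ρ ∈ (0, ρ₀/2)` (both sides may equal `+∞`). -/
theorem stmt_8 (C : ℝ) (hC : 0 < C) :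
    ∃ C' : ℝ, 0 < C' ∧
      ∀ (n : ℕ), 1 ≤ n → ∀ ρ₀ : ℝ, 0 < ρ₀ →
      ∀ h : EuclideanSpace ℝ (Fin n) → ENNReal, Measurable h →
      ∀ φ : ℝ → ℝ, (∀ t ∈ Set.Ioo (0 : ℝ) ρ₀, 0 < φ t) → MonotoneOn φ (Set.Ioo 0 ρ₀) →
      (∀ σ ρ : ℝ, 0 < σ → σ < ρ → ρ < ρ₀ →
        ∫⁻ x in {x : EuclideanSpace ℝ (Fin n) | σ < ‖x‖ ∧ ‖x‖ < ρ},
            ENNReal.ofReal (‖x‖ ^ ((2 : ℝ) - n)) * h x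
          ≤ ENNReal.ofReal (C * (Real.log (ρ / σ) * φ ρ) ^ ((1 : ℝ) / 2))) →
      ∀ ρ ∈ Set.Ioo (0 : ℝ) (ρ₀ / 2),
        ∫⁻ x in {x : EuclideanSpace ℝ (Fin n) | 0 < ‖x‖ ∧ ‖x‖ < ρ},
            ENNReal.ofReal (‖x‖ ^ ((2 : ℝ) - n)) * h x
          ≤ ∫⁻ t in Set.Ioc (0 : ℝ) (2 * ρ),
              ENNReal.ofReal (C' * φ t ^ ((1 : ℝ) / 2) / t) := by
  refine ⟨2 * C, by positivity, ?_⟩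
  intro n hn ρ₀ hρ₀ h hmeas φ hφpos hφmono hyp ρ hρ
  obtain ⟨hρpos, hρlt⟩ := hρ
  haveI : Nonempty (Fin n) := ⟨⟨0, hn⟩⟩
  haveI : Nontrivial (EuclideanSpace ℝ (Fin n)) := inferInstance
  set a : ℕ → ℝ := fun i => ρ / 2 ^ i with ha
  have hapos : ∀ i, 0 < a i := fun i => by positivity
  have haρ : ∀ i, a i ≤ ρ := fun i =>
    div_le_self hρpos.le (one_le_pow₀ (by norm_num))
  have haρ₀ : ∀ i, a i < ρ₀ := fun i => (haρ i).trans_lt (by linarith)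
  have hamem : ∀ i, a i ∈ Set.Ioo (0:ℝ) ρ₀ := fun i => ⟨hapos i, haρ₀ i⟩
  have hanti : ∀ i j, i ≤ j → a j ≤ a i := by
    intro i j hij
    apply div_le_div_of_nonneg_left hρpos.le (by positivity)
    exact pow_le_pow_right₀ (by norm_num) hij
  have halt : ∀ i, a (i + 1) < a i := by
    intro i
    apply div_lt_div_of_pos_left hρpos (by positivity)
    exact pow_lt_pow_right₀ (by norm_num) (Nat.lt_succ_self i)
  have hhalf : ∀ i, 2 * a (i + 1) = a i := by
    intro i; simp only [ha, pow_succ]; field_simp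
  -- coverage
  have hcover : {x : EuclideanSpace ℝ (Fin n) | 0 < ‖x‖ ∧ ‖x‖ < ρ} ⊆
      (⋃ i, {x : EuclideanSpace ℝ (Fin n) | a (i+1) < ‖x‖ ∧ ‖x‖ < a i}) ∪
      (⋃ i, Metric.sphere (0 : EuclideanSpace ℝ (Fin n)) (a (i+1))) := by
    intro x ⟨hx0, hxρ⟩
    set r := ‖x‖
    have hex : ∃ j, a j < r := by
      obtain ⟨k, hk⟩ := exists_pow_lt_of_lt_one (div_pos hx0 hρpos) (by norm_num : (1/2 : ℝ) < 1)
      refine ⟨k, ?_⟩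
      have h1 : ρ * (1/2 : ℝ)^k < ρ * (r / ρ) := mul_lt_mul_of_pos_left hk hρpos
      rw [mul_div_cancel₀ _ hρpos.ne'] at h1
      calc a k = ρ * (1/2 : ℝ)^k := by rw [ha]; field_simp; rw [← mul_pow]; norm_num
        _ < r := h1
    have hjspec : a (Nat.find hex) < r := Nat.find_spec hex
    have hj0 : Nat.find hex ≠ 0 := by
      intro hj0
      have h2 : a 0 < r := hj0 ▸ hjspec
      simp only [ha, pow_zero, div_one] at h2
      linarith
    obtain ⟨m, hm⟩ : ∃ m, Nat.find hex = m + 1 :=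
      ⟨Nat.find hex - 1, (Nat.succ_pred_eq_of_pos (Nat.pos_of_ne_zero hj0)).symm⟩
    have hale : r ≤ a m := by
      by_contra hcon
      exact (Nat.find_min hex (by omega : m < Nat.find hex)) (lt_of_not_ge hcon)
    rcases lt_or_eq_of_le hale with hlt | heq
    · left
      exact Set.mem_iUnion.2 ⟨m, hm ▸ hjspec, hlt⟩
    · right
      have hm0 : m ≠ 0 := by
        intro hm0
        rw [hm0] at heq
        simp only [ha, pow_zero, div_one] at heq
        linarith
      obtain ⟨l, hl⟩ : ∃ l, m = l + 1 :=
        ⟨m - 1, (Nat.succ_pred_eq_of_pos (Nat.pos_of_ne_zero hm0)).symm⟩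
      exact Set.mem_iUnion.2 ⟨l, by simp [mem_sphere_zero_iff_norm, ← hl, heq.symm]; rfl⟩
  have hNnull : volume (⋃ i, Metric.sphere (0 : EuclideanSpace ℝ (Fin n)) (a (i+1))) = 0 :=
    measure_iUnion_null fun i => Measure.addHaar_sphere volume 0 (a (i+1))
  -- per-annulus upper bound
  have hannulus : ∀ i, ∫⁻ x in {x : EuclideanSpace ℝ (Fin n) | a (i+1) < ‖x‖ ∧ ‖x‖ < a i},
      ENNReal.ofReal (‖x‖ ^ ((2 : ℝ) - n)) * h x
      ≤ ENNReal.ofReal (C * φ (a i) ^ ((1:ℝ)/2)) := by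
    intro i
    have h2 : a i / a (i+1) = 2 := by
      rw [div_eq_iff (hapos (i+1)).ne']
      exact (hhalf i).symm
    have hb := hyp (a (i+1)) (a i) (hapos (i+1)) (halt i) (haρ₀ i)
    rw [h2] at hb
    refine hb.trans (ENNReal.ofReal_le_ofReal ?_)
    have hφa : 0 < φ (a i) := hφpos _ (hamem i)
    have hlog2 : (0:ℝ) < Real.log 2 := Real.log_pos (by norm_num)
    have hlog2' : Real.log 2 ≤ 1 := le_of_lt (Real.log_two_lt_d9.trans (by norm_num))
    gcongr C * ?_
    apply Real.rpow_le_rpow (by positivity) _ (by norm_num)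
    nlinarith
  -- per-interval lower bound
  have hinterval : ∀ i, ENNReal.ofReal (C * φ (a i) ^ ((1:ℝ)/2))
      ≤ ∫⁻ t in Set.Ioc (a i) (2 * a i), ENNReal.ofReal (2 * C * φ t ^ ((1:ℝ)/2) / t) := by
    intro i
    have hφa : 0 < φ (a i) := hφpos _ (hamem i)
    have key : ∫⁻ _t in Set.Ioc (a i) (2 * a i),
        (ENNReal.ofReal (C * φ (a i) ^ ((1:ℝ)/2) / a i))
        ≤ ∫⁻ t in Set.Ioc (a i) (2 * a i), ENNReal.ofReal (2 * C * φ t ^ ((1:ℝ)/2) / t) := by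
      apply setLIntegral_mono' measurableSet_Ioc
      intro t ⟨ht1, ht2⟩
      apply ENNReal.ofReal_le_ofReal
      have htpos : 0 < t := (hapos i).trans ht1
      have htρ₀ : t < ρ₀ := by
        have := haρ i; linarith
      have hφt0 : 0 < φ t := hφpos t ⟨htpos, htρ₀⟩
      have hφt : φ (a i) ≤ φ t := hφmono (hamem i) ⟨htpos, htρ₀⟩ ht1.le
      have hrt : φ (a i) ^ ((1:ℝ)/2) ≤ φ t ^ ((1:ℝ)/2) :=
        Real.rpow_le_rpow hφa.le hφt (by norm_num)
      calc C * φ (a i) ^ ((1:ℝ)/2) / a i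
          = 2 * C * φ (a i) ^ ((1:ℝ)/2) / (2 * a i) := by ring
        _ ≤ 2 * C * φ t ^ ((1:ℝ)/2) / t :=
            div_le_div₀ (by positivity) (by nlinarith) htpos ht2
    refine le_trans ?_ key
    rw [setLIntegral_const, Real.volume_Ioc,
      ← ENNReal.ofReal_mul (by positivity)]
    apply ENNReal.ofReal_le_ofReal
    have h3 : 2 * a i - a i = a i := by ring
    rw [h3, div_mul_cancel₀ _ (hapos i).ne']
  -- disjointness of intervals
  have hdisj : Pairwise (Function.onFun Disjoint fun i => Set.Ioc (a i) (2 * a i)) := by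
    have key : ∀ i j, i < j → Disjoint (Set.Ioc (a i) (2 * a i)) (Set.Ioc (a j) (2 * a j)) := by
      intro i j hij
      rw [Set.disjoint_left]
      intro x ⟨hx1, _⟩ ⟨_, hx2⟩
      have h4 : 2 * a j ≤ a i := by
        calc 2 * a j ≤ 2 * a (i+1) := by
              have := hanti (i+1) j hij; linarith
          _ = a i := hhalf i
      linarith
    intro i j hij
    rcases hij.lt_or_gt with hlt | hlt
    · exact key i j hlt
    · exact (key j i hlt).symm
  have hsub : (⋃ i, Set.Ioc (a i) (2 * a i)) ⊆ Set.Ioc (0:ℝ) (2 * ρ) := by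
    intro x hx
    obtain ⟨i, hx1, hx2⟩ := Set.mem_iUnion.1 hx
    exact ⟨(hapos i).trans hx1, hx2.trans (by have := haρ i; linarith)⟩
  -- put everything together
  calc ∫⁻ x in {x : EuclideanSpace ℝ (Fin n) | 0 < ‖x‖ ∧ ‖x‖ < ρ},
        ENNReal.ofReal (‖x‖ ^ ((2 : ℝ) - n)) * h x
      ≤ ∫⁻ x in (⋃ i, {x : EuclideanSpace ℝ (Fin n) | a (i+1) < ‖x‖ ∧ ‖x‖ < a i}) ∪
          (⋃ i, Metric.sphere (0 : EuclideanSpace ℝ (Fin n)) (a (i+1))),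
          ENNReal.ofReal (‖x‖ ^ ((2 : ℝ) - n)) * h x := lintegral_mono_set hcover
    _ ≤ (∫⁻ x in ⋃ i, {x : EuclideanSpace ℝ (Fin n) | a (i+1) < ‖x‖ ∧ ‖x‖ < a i},
          ENNReal.ofReal (‖x‖ ^ ((2 : ℝ) - n)) * h x) +
        ∫⁻ x in ⋃ i, Metric.sphere (0 : EuclideanSpace ℝ (Fin n)) (a (i+1)),
          ENNReal.ofReal (‖x‖ ^ ((2 : ℝ) - n)) * h x := lintegral_union_le _ _ _
    _ = ∫⁻ x in ⋃ i, {x : EuclideanSpace ℝ (Fin n) | a (i+1) < ‖x‖ ∧ ‖x‖ < a i},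
          ENNReal.ofReal (‖x‖ ^ ((2 : ℝ) - n)) * h x := by
        rw [setLIntegral_measure_zero _ _ hNnull, add_zero]
    _ ≤ ∑' i, ∫⁻ x in {x : EuclideanSpace ℝ (Fin n) | a (i+1) < ‖x‖ ∧ ‖x‖ < a i},
          ENNReal.ofReal (‖x‖ ^ ((2 : ℝ) - n)) * h x := lintegral_iUnion_le _ _
    _ ≤ ∑' i, ENNReal.ofReal (C * φ (a i) ^ ((1:ℝ)/2)) := ENNReal.tsum_le_tsum hannulus
    _ ≤ ∑' i, ∫⁻ t in Set.Ioc (a i) (2 * a i), ENNReal.ofReal (2 * C * φ t ^ ((1:ℝ)/2) / t) :=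
        ENNReal.tsum_le_tsum hinterval
    _ = ∫⁻ t in ⋃ i, Set.Ioc (a i) (2 * a i), ENNReal.ofReal (2 * C * φ t ^ ((1:ℝ)/2) / t) :=
        (lintegral_iUnion (fun i => measurableSet_Ioc) hdisj _).symm
    _ ≤ ∫⁻ t in Set.Ioc (0:ℝ) (2 * ρ), ENNReal.ofReal (2 * C * φ t ^ ((1:ℝ)/2) / t) :=
        lintegral_mono_set hsub
end
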